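/- arXiv:1609.05471 — 5 statements merged into one kernel-verified Lean document; each statement's English description precedes it below -/
import Mathlib

section
/- For any finite poset P on {1,2,…,n}, the map Φ sending a P-forest F to the set {Λ_1^F, Λ_2^F, …, Λ_n^F} of its principal order ideals is a bijection from the set of P-forests onto the set of maximum independent sets of the graph G_P. -/
attribute [local instance] Classical.propDecidable

noncomputable section

open Finset

variable {n : ℕ}

/-- The comparability graph of the poset structure `P` on `Fin n`; for an order
ideal of `P`, connectivity of its induced subgraph in this graph agrees with
connectivity of the Hasse diagram. -/
def compGraph (P : PartialOrder (Fin n)) : SimpleGraph (Fin n) where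
  Adj i j := i ≠ j ∧ (P.le i j ∨ P.le j i)
  symm := by
    constructor
    intro i j h
    exact ⟨h.1.symm, h.2.symm⟩
  loopless := by
    constructor
    intro i h
    exact h.1 rfl

/-- `J` is an order ideal of the poset `P`. -/
def IsIdeal (P : PartialOrder (Fin n)) (J : Finset (Fin n)) : Prop :=
  ∀ i ∈ J, ∀ j : Fin n, P.le j i → j ∈ J

/-- The Hasse diagram of `J` as a subposet of `P` is a connected graph. -/
def JConn (P : PartialOrder (Fin n)) (J : Finset (Fin n)) : Prop :=
  ((compGraph P).induce (↑J : Set (Fin n))).Connected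

/-- `J` is a connected order ideal of `P`. -/
def IsConnIdeal (P : PartialOrder (Fin n)) (J : Finset (Fin n)) : Prop :=
  IsIdeal P J ∧ JConn P J

/-- The type of connected order ideals of `P` (the vertices of `G_P`). -/
abbrev ConnIdeal (P : PartialOrder (Fin n)) : Type :=
  {J : Finset (Fin n) // IsConnIdeal P J}

instance (P : PartialOrder (Fin n)) : Fintype (ConnIdeal P) := Fintype.ofFinite _

/-- `A` and `B` intersect nontrivially. -/
def Nontriv (A B : Finset (Fin n)) : Prop :=
  (A ∩ B).Nonempty ∧ ¬ A ⊆ B ∧ ¬ B ⊆ A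

/-- The graph `G_P` on the connected order ideals of `P`, with two ideals
adjacent iff they intersect nontrivially. -/
def GP (P : PartialOrder (Fin n)) : SimpleGraph (ConnIdeal P) where
  Adj A B := Nontriv A.1 B.1
  symm := by
    constructor
    intro A B h
    exact ⟨by rw [Finset.inter_comm]; exact h.1, h.2.2, h.2.1⟩
  loopless := by
    constructor
    intro A h
    exact h.2.1 (Finset.Subset.refl _)

instance (P : PartialOrder (Fin n)) : Fintype ((GP P).ConnectedComponent) :=
  Fintype.ofFinite _

instance (P : PartialOrder (Fin n)) : Fintype ((GP P).edgeSet) :=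
  Fintype.ofFinite _

/-- `s` is an independent set of the graph `G`. -/
def IsIndep {V : Type*} (G : SimpleGraph V) (s : Finset V) : Prop :=
  ∀ a ∈ s, ∀ b ∈ s, ¬ G.Adj a b

/-- `s` is a maximum independent set of the graph `G`. -/
def IsMaxIndep {V : Type*} (G : SimpleGraph V) (s : Finset V) : Prop :=
  IsIndep G s ∧ ∀ t : Finset V, IsIndep G t → t.card ≤ s.card

/-- `s` is a maximum independent set of the subgraph of `G` induced on the
vertex set `S` (e.g. on a connected component of `G`). -/
def IsMaxIndepOn {V : Type*} (G : SimpleGraph V) (S : Set V) (s : Finset V) : Prop :=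
  ↑s ⊆ S ∧ IsIndep G s ∧ ∀ t : Finset V, ↑t ⊆ S → IsIndep G t → t.card ≤ s.card

/-- `μ(M, J) = ⋃_{J' ∈ M, J' ⊊ J} J'`. -/
def mu (P : PartialOrder (Fin n)) (M : Finset (ConnIdeal P)) (J : Finset (Fin n)) :
    Finset (Fin n) :=
  (M.filter (fun J' => J'.1 ⊂ J)).biUnion (fun J' => J'.1)

/-- The strict order relation of the poset `F_M` associated with a maximum
independent set `M` of `G_P`: `i <_{F_M} j` iff `J_a ⊊ J_b` where `J_a, J_b ∈ M`
satisfy `J_a \ μ(M,J_a) = {i}` and `J_b \ μ(M,J_b) = {j}`. -/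
def FMlt (P : PartialOrder (Fin n)) (M : Finset (ConnIdeal P)) (i j : Fin n) : Prop :=
  ∃ Ja ∈ M, ∃ Jb ∈ M,
    Ja.1 \ mu P M Ja.1 = {i} ∧ Jb.1 \ mu P M Jb.1 = {j} ∧ Ja.1 ⊂ Jb.1

/-- The order relation of the poset `F_M`. -/
def FMle (P : PartialOrder (Fin n)) (M : Finset (ConnIdeal P)) (i j : Fin n) : Prop :=
  i = j ∨ FMlt P M i j

/-- Strict relation associated with the relation `le`. -/
def ltRel (le : Fin n → Fin n → Prop) (i j : Fin n) : Prop := le i j ∧ i ≠ j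

/-- `j` covers `i` in the order given by the relation `le`. -/
def CovRel (le : Fin n → Fin n → Prop) (i j : Fin n) : Prop :=
  ltRel le i j ∧ ∀ k : Fin n, ltRel le i k → ¬ ltRel le k j

/-- The principal order ideal `Λ_i = {j : j ≤ i}` of the order given by `le`. -/
def LamRel (le : Fin n → Fin n → Prop) (i : Fin n) : Finset (Fin n) :=
  Finset.univ.filter (fun j => le j i)

/-- The descent set of a forest order given by the relation `le`:
elements `i` whose parent (the element covering `i`) is smaller than `i`. -/
def DesRel (le : Fin n → Fin n → Prop) : Finset (Fin n) :=
  Finset.univ.filter (fun i => ∃ j : Fin n, CovRel le i j ∧ j < i)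

/-- `Des(M) = Des(F_M)`. -/
def DesM (P : PartialOrder (Fin n)) (M : Finset (ConnIdeal P)) : Finset (Fin n) :=
  DesRel (FMle P M)

/-- `Des(M_r, M)`. -/
def DesMr (P : PartialOrder (Fin n)) (Mr M : Finset (ConnIdeal P)) : Finset (Fin n) :=
  (DesM P M).filter (fun i => ∃ J ∈ Mr, J.1 \ mu P M J.1 = {i})

/-- `Des̄(M_r, M)`. -/
def DesBarMr (P : PartialOrder (Fin n)) (Mr M : Finset (ConnIdeal P)) :
    Finset (ConnIdeal P) :=
  Mr.filter (fun J => ∃ i ∈ DesMr P Mr M, J.1 \ mu P M J.1 = {i})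

/-- The relation `le` is (the order relation of) a `P`-forest: a partial order
whose Hasse diagram is a forest, all of whose principal order ideals are
connected order ideals of `P`, and such that for incomparable `i, j` the union
`Λ_i ∪ Λ_j` is a disconnected order ideal of `P`. -/
structure IsPForestRel (P : PartialOrder (Fin n)) (le : Fin n → Fin n → Prop) : Prop where
  refl : ∀ i, le i i
  trans : ∀ i j k, le i j → le j k → le i k
  antisymm : ∀ i j, le i j → le j i → i = j
  forest : ∀ i j k, CovRel le i j → CovRel le i k → j = k
  connIdeal : ∀ i, IsConnIdeal P (LamRel le i)
  disc : ∀ i j : Fin n, ¬ le i j → ¬ le j i →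
    IsIdeal P (LamRel le i ∪ LamRel le j) ∧ ¬ JConn P (LamRel le i ∪ LamRel le j)

/-- The principal order ideal `Λ_i^P` of `P`. -/
def PIdeal (P : PartialOrder (Fin n)) (i : Fin n) : Finset (Fin n) :=
  Finset.univ.filter (fun k => P.le k i)

/-- The generating set `gs(J)`: the maximal elements of `J` with respect to `P`. -/
def gsJ (P : PartialOrder (Fin n)) (J : Finset (Fin n)) : Finset (Fin n) :=
  J.filter (fun i => ∀ j ∈ J, ¬ P.lt i j)

/-- `P` is naturally labeled. -/
def NatLabeled (P : PartialOrder (Fin n)) : Prop :=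
  ∀ i j : Fin n, P.lt i j → i < j

/-- `U_max(M, J)`: the maximal members of `U(M,J) = {J' ∈ M : J' ⊊ J}`. -/
def Umax (P : PartialOrder (Fin n)) (M : Finset (ConnIdeal P)) (J : Finset (Fin n)) :
    Finset (ConnIdeal P) :=
  (M.filter (fun Ja => Ja.1 ⊂ J)).filter
    (fun Ja => ∀ Jb ∈ M, Jb.1 ⊂ J → Jb ≠ Ja → ¬ Ja.1 ⊂ Jb.1)

/-- The set of vertices of `G_P` which are principal order ideals of `P`. -/
def PIdealSet (P : PartialOrder (Fin n)) : Set (ConnIdeal P) :=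
  {A : ConnIdeal P | ∃ i : Fin n, A.1 = PIdeal P i}

/-- The graph `H_P`: the subgraph of `G_P` induced by the principal order ideals. -/
def HP (P : PartialOrder (Fin n)) : SimpleGraph (PIdealSet P) :=
  (GP P).induce (PIdealSet P)

/-- `f` is a `P`-partition. -/
def IsPPartition (P : PartialOrder (Fin n)) (f : Fin n → ℕ) : Prop :=
  (∀ i j : Fin n, P.lt i j → f j ≤ f i) ∧
  (∀ i j : Fin n, P.lt i j → j < i → f j < f i)

/-- The monomial `∏_{k ∈ J} x_k`. -/
def xJ (J : Finset (Fin n)) : MvPowerSeries (Fin n) ℚ :=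
  ∏ k ∈ J, MvPowerSeries.X k

/-- The set of linear extensions of `P`, viewed as permutations `w` of `Fin n`
(in positions `0, …, n-1`) such that `i < j` whenever `w i <_P w j`. -/
def LinExts (P : PartialOrder (Fin n)) : Finset (Equiv.Perm (Fin n)) :=
  Finset.univ.filter (fun w => ∀ i j : Fin n, P.lt (w i) (w j) → i < j)

/-- The major index of a permutation (with 1-indexed positions). -/
def maj (w : Equiv.Perm (Fin n)) : ℕ :=
  ∑ i ∈ Finset.univ.filter
      (fun i : Fin n => ∃ h : (i : ℕ) + 1 < n, w ⟨(i : ℕ) + 1, h⟩ < w i),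
    ((i : ℕ) + 1)

/-- The finset of maximum independent sets of the connected component `c` of `G_P`. -/
def MaxIndepsOn (P : PartialOrder (Fin n)) (c : (GP P).ConnectedComponent) :
    Finset (Finset (ConnIdeal P)) :=
  Finset.univ.filter (fun Mr : Finset (ConnIdeal P) => IsMaxIndepOn (GP P) c.supp Mr)
section AuxLemmas

variable {n : ℕ} (P : PartialOrder (Fin n))

lemma reach_mono {S T : Set (Fin n)} (hST : S ⊆ T) {a b : S}
    (h : ((compGraph P).induce S).Reachable a b) :
    ((compGraph P).induce T).Reachable ⟨a.1, hST a.2⟩ ⟨b.1, hST b.2⟩ := by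
  let f : (compGraph P).induce S →g (compGraph P).induce T :=
    ⟨fun x => ⟨x.1, hST x.2⟩, fun {x y} h => h⟩
  exact h.map f

lemma union_disconnected {A B : Finset (Fin n)} (hA : IsIdeal P A) (hB : IsIdeal P B)
    (hd : ∀ x ∈ A, x ∉ B) (hAne : A.Nonempty) (hBne : B.Nonempty) :
    ¬ JConn P (A ∪ B) := by
  intro hconn
  obtain ⟨a, ha⟩ := hAne
  obtain ⟨b, hb⟩ := hBne
  have hav : (a : Fin n) ∈ (↑(A ∪ B) : Set (Fin n)) := by simp [ha]
  have hbv : (b : Fin n) ∈ (↑(A ∪ B) : Set (Fin n)) := by simp [hb]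
  obtain ⟨w⟩ := hconn.preconnected ⟨a, hav⟩ ⟨b, hbv⟩
  have key : ∀ (x y : (↑(A ∪ B) : Set (Fin n)))
      (_ : ((compGraph P).induce (↑(A ∪ B) : Set (Fin n))).Walk x y),
      x.1 ∈ A → y.1 ∈ A := by
    intro x y w
    induction w with
    | nil => exact id
    | @cons u c v h p ih =>
      intro hu
      apply ih
      have h' : (compGraph P).Adj u.1 c.1 := h
      have hc : c.1 ∈ A ∪ B := by simpa using c.2
      rcases h'.2 with hle | hle
      · rcases Finset.mem_union.mp hc with h1 | h1
        · exact h1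
        · exact absurd (hB c.1 h1 u.1 hle) (hd u.1 hu)
      · exact hA u.1 hu c.1 hle
  exact hd b (key _ _ w ha) hb

/-- The connected component of `i` in the induced subgraph on `I`. -/
def comp (I : Finset (Fin n)) (i : Fin n) : Finset (Fin n) :=
  I.filter (fun j => ∃ (hj : j ∈ (↑I : Set (Fin n))) (hi : i ∈ (↑I : Set (Fin n))),
    ((compGraph P).induce (↑I : Set (Fin n))).Reachable ⟨j, hj⟩ ⟨i, hi⟩)

lemma comp_subset {I : Finset (Fin n)} {i : Fin n} : comp P I i ⊆ I :=
  Finset.filter_subset _ _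

lemma mem_comp_self {I : Finset (Fin n)} {i : Fin n} (hi : i ∈ I) : i ∈ comp P I i :=
  Finset.mem_filter.mpr ⟨hi, hi, hi, SimpleGraph.Reachable.refl _⟩

lemma comp_ideal {I : Finset (Fin n)} {i : Fin n} (hI : IsIdeal P I) :
    IsIdeal P (comp P I i) := by
  intro x hx y hyx
  obtain ⟨hxI, hjx, hix, hreach⟩ := Finset.mem_filter.mp hx
  have hyI : y ∈ I := hI x hxI y hyx
  by_cases hyx' : y = x
  · subst hyx'; exact hx
  · have hadj : ((compGraph P).induce (↑I : Set (Fin n))).Adj ⟨y, hyI⟩ ⟨x, hjx⟩ :=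
      ⟨hyx', Or.inl hyx⟩
    exact Finset.mem_filter.mpr ⟨hyI, hyI, hix, hadj.reachable.trans hreach⟩

lemma comp_conn {I : Finset (Fin n)} {i : Fin n} (hi : i ∈ I) : JConn P (comp P I i) := by
  have hii : i ∈ comp P I i := mem_comp_self P hi
  have hii' : i ∈ (↑(comp P I i) : Set (Fin n)) := hii
  have hkey : ∀ (a b : (↑I : Set (Fin n)))
      (_ : ((compGraph P).induce (↑I : Set (Fin n))).Walk a b)
      (hb : b.1 ∈ (↑(comp P I i) : Set (Fin n))),
      ∃ (ha : a.1 ∈ (↑(comp P I i) : Set (Fin n))),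
      ((compGraph P).induce (↑(comp P I i) : Set (Fin n))).Reachable ⟨a.1, ha⟩ ⟨b.1, hb⟩ := by
    intro a b w
    induction w with
    | nil => intro hb; exact ⟨hb, SimpleGraph.Reachable.refl _⟩
    | @cons u c v h p ih =>
      intro hb
      obtain ⟨hc, r⟩ := ih hb
      obtain ⟨hcI, hjc, hic, hreachc⟩ := Finset.mem_filter.mp (Finset.mem_coe.mp hc)
      have hadjI : ((compGraph P).induce (↑I : Set (Fin n))).Adj ⟨u.1, u.2⟩ ⟨c.1, hjc⟩ := h
      have hu : u.1 ∈ comp P I i :=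
        Finset.mem_filter.mpr ⟨u.2, u.2, hic, hadjI.reachable.trans hreachc⟩
      have hadj : ((compGraph P).induce
          (↑(comp P I i) : Set (Fin n))).Adj ⟨u.1, hu⟩ ⟨c.1, hc⟩ := h
      exact ⟨hu, hadj.reachable.trans r⟩
  show ((compGraph P).induce (↑(comp P I i) : Set (Fin n))).Connected
  rw [SimpleGraph.connected_iff]
  refine ⟨?_, ⟨⟨i, hii'⟩⟩⟩
  · intro u v
    obtain ⟨huI, hju, _, hreachu⟩ := Finset.mem_filter.mp (Finset.mem_coe.mp u.2)
    obtain ⟨hvI, hjv, _, hreachv⟩ := Finset.mem_filter.mp (Finset.mem_coe.mp v.2)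
    obtain ⟨wu⟩ := hreachu
    obtain ⟨wv⟩ := hreachv
    obtain ⟨hu', ru⟩ := hkey ⟨u.1, hju⟩ ⟨i, hi⟩ wu hii'
    obtain ⟨hv', rv⟩ := hkey ⟨v.1, hjv⟩ ⟨i, hi⟩ wv hii'
    exact ru.trans rv.symm


lemma comp_reach {I : Finset (Fin n)} {i x : Fin n} (hx : x ∈ comp P I i) :
    ∃ (hx' : x ∈ (↑I : Set (Fin n))) (hi : i ∈ (↑I : Set (Fin n))),
      ((compGraph P).induce (↑I : Set (Fin n))).Reachable ⟨x, hx'⟩ ⟨i, hi⟩ :=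
  (Finset.mem_filter.mp hx).2

lemma mem_comp_of_reach {I : Finset (Fin n)} {i x : Fin n}
    (hx : x ∈ (↑I : Set (Fin n))) (hi : i ∈ (↑I : Set (Fin n)))
    (h : ((compGraph P).induce (↑I : Set (Fin n))).Reachable ⟨x, hx⟩ ⟨i, hi⟩) :
    x ∈ comp P I i :=
  Finset.mem_filter.mpr ⟨hx, hx, hi, h⟩

lemma connIdeal_nonempty (J : ConnIdeal P) : J.1.Nonempty := by
  obtain ⟨⟨x, hx⟩⟩ := J.2.2.nonempty
  exact ⟨x, hx⟩

lemma indep_nested {M : Finset (ConnIdeal P)} (hM : IsIndep (GP P) M)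
    {A B : ConnIdeal P} (hA : A ∈ M) (hB : B ∈ M) {x : Fin n}
    (hxA : x ∈ A.1) (hxB : x ∈ B.1) : A.1 ⊆ B.1 ∨ B.1 ⊆ A.1 := by
  by_contra h
  push_neg at h
  exact hM A hA B hB ⟨⟨x, Finset.mem_inter.mpr ⟨hxA, hxB⟩⟩, h.1, h.2⟩

lemma subset_mu {M : Finset (ConnIdeal P)} {A : ConnIdeal P} (hA : A ∈ M)
    {J : Finset (Fin n)} (hss : A.1 ⊂ J) : A.1 ⊆ mu P M J := by
  intro x hx
  exact Finset.mem_biUnion.mpr ⟨A, Finset.mem_filter.mpr ⟨hA, hss⟩, hx⟩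

lemma leftover_nonempty {M : Finset (ConnIdeal P)} (hM : IsIndep (GP P) M)
    {J : ConnIdeal P} (hJ : J ∈ M) : (J.1 \ mu P M J.1).Nonempty := by
  rw [Finset.sdiff_nonempty]
  intro hsub
  set U : Finset (ConnIdeal P) := M.filter (fun J' => J'.1 ⊂ J.1) with hU
  have hUne : U.Nonempty := by
    obtain ⟨x, hx⟩ := connIdeal_nonempty P J
    obtain ⟨A0, hA0, _⟩ := Finset.mem_biUnion.mp (hsub hx)
    exact ⟨A0, hA0⟩
  obtain ⟨A, hAU, hAmax⟩ := Finset.exists_max_image U (fun J' => J'.1.card) hUne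
  have hAM : A ∈ M := (Finset.mem_filter.mp hAU).1
  have hAJ : A.1 ⊂ J.1 := (Finset.mem_filter.mp hAU).2
  have hsplit : ∀ J' ∈ U, J'.1 ⊆ A.1 ∨ ∀ x ∈ J'.1, x ∉ A.1 := by
    intro J' hJ'U
    by_cases he : J' = A
    · left; rw [he]
    · by_cases hint : (J'.1 ∩ A.1).Nonempty
      · obtain ⟨x, hx⟩ := hint
        have hx1 := (Finset.mem_inter.mp hx).1
        have hx2 := (Finset.mem_inter.mp hx).2
        rcases indep_nested P hM (Finset.mem_filter.mp hJ'U).1 hAM hx1 hx2 with hc | hc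
        · exact Or.inl hc
        · have : A.1 = J'.1 := Finset.eq_of_subset_of_card_le hc (hAmax J' hJ'U)
          exact absurd (Subtype.ext this.symm) he
      · right
        intro x hx hxA
        exact hint ⟨x, Finset.mem_inter.mpr ⟨hx, hxA⟩⟩
  set B : Finset (Fin n) :=
    (U.filter (fun J' => ¬ J'.1 ⊆ A.1)).biUnion (fun J' => J'.1) with hB
  have hd : ∀ x ∈ A.1, x ∉ B := by
    intro x hxA hxB
    obtain ⟨J', hJ'f, hxJ'⟩ := Finset.mem_biUnion.mp hxB
    obtain ⟨hJ'U, hnsub⟩ := Finset.mem_filter.mp hJ'f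
    rcases hsplit J' hJ'U with hc | hc
    · exact hnsub hc
    · exact hc x hxJ' hxA
  have hJeq : J.1 = A.1 ∪ B := by
    apply Finset.Subset.antisymm
    · intro x hx
      obtain ⟨J', hJ'U, hxJ'⟩ := Finset.mem_biUnion.mp (hsub hx)
      by_cases hsx : J'.1 ⊆ A.1
      · exact Finset.mem_union_left _ (hsx hxJ')
      · exact Finset.mem_union_right _
          (Finset.mem_biUnion.mpr ⟨J', Finset.mem_filter.mpr ⟨hJ'U, hsx⟩, hxJ'⟩)
    · apply Finset.union_subset hAJ.subset
      apply Finset.biUnion_subset.mpr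
      intro J' hJ'f
      exact ((Finset.mem_filter.mp ((Finset.mem_filter.mp hJ'f).1)).2).subset
  have hBne : B.Nonempty := by
    obtain ⟨x, hxJ, hxA⟩ := Finset.exists_of_ssubset hAJ
    rcases Finset.mem_union.mp (hJeq ▸ hxJ) with hc | hc
    · exact absurd hc hxA
    · exact ⟨x, hc⟩
  have hBideal : IsIdeal P B := by
    intro x hx y hy
    obtain ⟨J', hJ'f, hxJ'⟩ := Finset.mem_biUnion.mp hx
    exact Finset.mem_biUnion.mpr ⟨J', hJ'f, J'.2.1 x hxJ' y hy⟩
  have := union_disconnected P A.2.1 hBideal hd (connIdeal_nonempty P A) hBne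
  rw [← hJeq] at this
  exact this J.2.2

lemma leftover_disjoint {M : Finset (ConnIdeal P)} (hM : IsIndep (GP P) M)
    {A B : ConnIdeal P} (hA : A ∈ M) (hB : B ∈ M) (hne : A ≠ B) :
    ∀ x ∈ A.1 \ mu P M A.1, x ∉ B.1 \ mu P M B.1 := by
  intro x hxA hxB
  obtain ⟨hx1, hx2⟩ := Finset.mem_sdiff.mp hxA
  obtain ⟨hx3, hx4⟩ := Finset.mem_sdiff.mp hxB
  have hne' : A.1 ≠ B.1 := fun h => hne (Subtype.ext h)
  rcases indep_nested P hM hA hB hx1 hx3 with hc | hc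
  · exact hx4 (subset_mu P hA ⟨hc, fun h => hne' (Finset.Subset.antisymm hc h)⟩ hx1)
  · exact hx2 (subset_mu P hB ⟨hc, fun h => hne' (Finset.Subset.antisymm h hc)⟩ hx3)

lemma indep_card_le {M : Finset (ConnIdeal P)} (hM : IsIndep (GP P) M) : M.card ≤ n := by
  have hdisj : ∀ A ∈ M, ∀ B ∈ M, A ≠ B →
      Disjoint (A.1 \ mu P M A.1) (B.1 \ mu P M B.1) :=
    fun A hA B hB hne => Finset.disjoint_left.mpr (leftover_disjoint P hM hA hB hne)
  calc M.card = ∑ _J ∈ M, 1 := by simp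
    _ ≤ ∑ J ∈ M, (J.1 \ mu P M J.1).card :=
        Finset.sum_le_sum (fun J hJ => Finset.card_pos.mpr (leftover_nonempty P hM hJ))
    _ = (M.biUnion (fun J => J.1 \ mu P M J.1)).card := (Finset.card_biUnion hdisj).symm
    _ ≤ Fintype.card (Fin n) := Finset.card_le_univ _
    _ = n := Fintype.card_fin n

lemma exists_indep_card_n : ∃ W : Finset (ConnIdeal P),
    IsIndep (GP P) W ∧ W.card = n := by
  haveI : IsPartialOrder (Fin n) P.le :=
    { refl := P.le_refl, trans := P.le_trans, antisymm := P.le_antisymm }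
  obtain ⟨s, hlin, hext⟩ := extend_partialOrder P.le
  haveI := hlin
  have hrefl : ∀ a, s a a := fun a => refl_of s a
  have htrans : ∀ {a b c}, s a b → s b c → s a c := fun h1 h2 => trans_of s h1 h2
  have hanti : ∀ {a b}, s a b → s b a → a = b := fun h1 h2 => antisymm_of s h1 h2
  have htot : ∀ a b, s a b ∨ s b a := fun a b => total_of s a b
  set Iseg : Fin n → Finset (Fin n) := fun i => Finset.univ.filter (fun j => s j i)
    with hIseg
  have hIdeal : ∀ i, IsIdeal P (Iseg i) := by
    intro i x hx y hyx
    simp only [hIseg, Finset.mem_filter, Finset.mem_univ, true_and] at hx ⊢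
    exact htrans (hext y x hyx) hx
  have hselfI : ∀ i, i ∈ Iseg i := fun i => by
    simp only [hIseg, Finset.mem_filter, Finset.mem_univ, true_and]; exact hrefl i
  have hmono : ∀ {i j}, s i j → (↑(Iseg i) : Set (Fin n)) ⊆ (↑(Iseg j) : Set (Fin n)) := by
    intro i j hij x hx
    simp only [hIseg, Finset.coe_filter, Finset.mem_univ, true_and,
      Set.mem_setOf_eq] at hx ⊢
    exact htrans hx hij
  set C : Fin n → Finset (Fin n) := fun i => comp P (Iseg i) i with hC
  have hsub : ∀ i, C i ⊆ Iseg i := fun i => comp_subset P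
  have hselfC : ∀ i, i ∈ C i := fun i => mem_comp_self P (hselfI i)
  have hlam : ∀ i j, s j i → (C j ∩ C i).Nonempty → C j ⊆ C i := by
    intro i j hji ⟨x, hx⟩ u hu
    obtain ⟨hx1, hx2⟩ := Finset.mem_inter.mp hx
    obtain ⟨hxj', hjj', rxj⟩ := comp_reach P hx1
    obtain ⟨hxi', hii', rxi⟩ := comp_reach P hx2
    obtain ⟨huj', _, ruj⟩ := comp_reach P hu
    have ruj' := reach_mono P (hmono hji) ruj
    have rxj' := reach_mono P (hmono hji) rxj
    exact mem_comp_of_reach P (hmono hji huj') hii' (ruj'.trans (rxj'.symm.trans rxi))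
  have hconn : ∀ i, IsConnIdeal P (C i) :=
    fun i => ⟨comp_ideal P (hIdeal i), comp_conn P (hselfI i)⟩
  refine ⟨Finset.univ.image (fun i => (⟨C i, hconn i⟩ : ConnIdeal P)), ?_, ?_⟩
  · intro a ha b hb hadj
    obtain ⟨i, _, rfl⟩ := Finset.mem_image.mp ha
    obtain ⟨j, _, rfl⟩ := Finset.mem_image.mp hb
    obtain ⟨hne, h1, h2⟩ := hadj
    rcases htot i j with hc | hc
    · exact h1 (hlam j i hc hne)
    · exact h2 (hlam i j hc (by rwa [Finset.inter_comm] at hne))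
  · have hinj : Function.Injective (fun i => (⟨C i, hconn i⟩ : ConnIdeal P)) := by
      intro i j h
      have hCe : C i = C j := congrArg Subtype.val h
      have h1 : s i j := by
        have := hsub j (hCe ▸ hselfC i)
        simpa only [hIseg, Finset.mem_filter, Finset.mem_univ, true_and] using this
      have h2 : s j i := by
        have := hsub i (hCe ▸ hselfC j)
        simpa only [hIseg, Finset.mem_filter, Finset.mem_univ, true_and] using this
      exact hanti h1 h2
    rw [Finset.card_image_of_injective _ hinj, Finset.card_univ, Fintype.card_fin]

lemma isMaxIndep_iff {M : Finset (ConnIdeal P)} :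
    IsMaxIndep (GP P) M ↔ IsIndep (GP P) M ∧ M.card = n := by
  constructor
  · rintro ⟨h1, h2⟩
    refine ⟨h1, le_antisymm (indep_card_le P h1) ?_⟩
    obtain ⟨W, hW1, hW2⟩ := exists_indep_card_n P
    exact le_trans (le_of_eq hW2.symm) (h2 W hW1)
  · rintro ⟨h1, h2⟩
    refine ⟨h1, fun t ht => ?_⟩
    rw [h2]
    exact indep_card_le P ht


lemma mem_lamRel {le : Fin n → Fin n → Prop} {i j : Fin n} :
    j ∈ LamRel le i ↔ le j i := by
  simp [LamRel]

section ForestLemmas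

variable {le : Fin n → Fin n → Prop}

lemma self_mem_lamRel (hF : IsPForestRel P le) (i : Fin n) : i ∈ LamRel le i :=
  mem_lamRel.mpr (hF.refl i)

lemma lamRel_mono (hF : IsPForestRel P le) {i j : Fin n} (h : le i j) :
    LamRel le i ⊆ LamRel le j := by
  intro x hx
  exact mem_lamRel.mpr (hF.trans x i j (mem_lamRel.mp hx) h)

lemma phi_indep (hF : IsPForestRel P le) : IsIndep (GP P)
    (Finset.univ.image (fun i => (⟨LamRel le i, hF.connIdeal i⟩ : ConnIdeal P))) := by
  intro a ha b hb hadj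
  obtain ⟨i, _, rfl⟩ := Finset.mem_image.mp ha
  obtain ⟨j, _, rfl⟩ := Finset.mem_image.mp hb
  obtain ⟨hne, h1, h2⟩ := hadj
  by_cases hij : le i j
  · exact h1 (lamRel_mono P hF hij)
  by_cases hji : le j i
  · exact h2 (lamRel_mono P hF hji)
  obtain ⟨-, hnc⟩ := hF.disc i j hij hji
  apply hnc
  show ((compGraph P).induce (↑(LamRel le i ∪ LamRel le j) : Set (Fin n))).Connected
  rw [Finset.coe_union]
  apply SimpleGraph.induce_union_connected (hF.connIdeal i).2.preconnected (hF.connIdeal j).2.preconnected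
  obtain ⟨x, hx⟩ := hne
  obtain ⟨hx1, hx2⟩ := Finset.mem_inter.mp hx
  exact ⟨x, hx1, hx2⟩

lemma phi_inj (hF : IsPForestRel P le) :
    Function.Injective (fun i => (⟨LamRel le i, hF.connIdeal i⟩ : ConnIdeal P)) := by
  intro i j h
  have he : LamRel le i = LamRel le j := congrArg Subtype.val h
  have h1 : le i j := mem_lamRel.mp (he ▸ self_mem_lamRel P hF i)
  have h2 : le j i := mem_lamRel.mp (he.symm ▸ self_mem_lamRel P hF j)
  exact hF.antisymm i j h1 h2

lemma lam_subset_of_image_eq (hF : IsPForestRel P le)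
    {le' : Fin n → Fin n → Prop} (hF' : IsPForestRel P le')
    (h : Finset.univ.image (fun i => (⟨LamRel le i, hF.connIdeal i⟩ : ConnIdeal P)) =
         Finset.univ.image (fun i => (⟨LamRel le' i, hF'.connIdeal i⟩ : ConnIdeal P)))
    (i : Fin n) : LamRel le' i ⊆ LamRel le i := by
  have hmem : (⟨LamRel le i, hF.connIdeal i⟩ : ConnIdeal P) ∈
      Finset.univ.image (fun i => (⟨LamRel le' i, hF'.connIdeal i⟩ : ConnIdeal P)) := by
    rw [← h]
    exact Finset.mem_image_of_mem _ (Finset.mem_univ i)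
  obtain ⟨j, _, hj⟩ := Finset.mem_image.mp hmem
  have hje : LamRel le' j = LamRel le i := congrArg Subtype.val hj
  have hij : le' i j := mem_lamRel.mp (hje.symm ▸ self_mem_lamRel P hF i)
  rw [← hje]
  exact lamRel_mono P hF' hij

end ForestLemmas

lemma exists_forest {M : Finset (ConnIdeal P)} (h1 : IsIndep (GP P) M)
    (hcard : M.card = n) :
    ∃ F : {F : PartialOrder (Fin n) // IsPForestRel P F.le},
      Finset.univ.image
        (fun i : Fin n => (⟨LamRel F.1.le i, F.2.connIdeal i⟩ : ConnIdeal P)) = M := by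
  classical
  set S : ConnIdeal P → Finset (Fin n) := fun J => J.1 \ mu P M J.1 with hS
  have hS1 : ∀ J ∈ M, (S J).Nonempty := fun J hJ => leftover_nonempty P h1 hJ
  have hdisj : ∀ A ∈ M, ∀ B ∈ M, A ≠ B → Disjoint (S A) (S B) :=
    fun A hA B hB hne => Finset.disjoint_left.mpr (leftover_disjoint P h1 hA hB hne)
  have hbUcard : (M.biUnion S).card = ∑ J ∈ M, (S J).card := Finset.card_biUnion hdisj
  have hone : ∀ J ∈ M, (S J).card = 1 := by
    by_contra hc
    push_neg at hc
    obtain ⟨J0, hJ0, hne0⟩ := hc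
    have h20 : 1 ≤ (S J0).card := Finset.card_pos.mpr (hS1 J0 hJ0)
    have hlt : M.card < ∑ J ∈ M, (S J).card := by
      calc M.card = ∑ _J ∈ M, 1 := by simp
        _ < ∑ J ∈ M, (S J).card := by
            apply Finset.sum_lt_sum
              (fun J hJ => Finset.card_pos.mpr (hS1 J hJ))
            exact ⟨J0, hJ0, by omega⟩
    have hle : ∑ J ∈ M, (S J).card ≤ n := by
      rw [← hbUcard]
      calc (M.biUnion S).card ≤ Fintype.card (Fin n) := Finset.card_le_univ _
        _ = n := Fintype.card_fin n
    omega
  have hbUeq : M.biUnion S = Finset.univ := by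
    apply Finset.eq_univ_of_card
    rw [hbUcard, Finset.sum_congr rfl hone]
    simp [hcard]
  have hcover : ∀ i : Fin n, ∃ J, J ∈ M ∧ i ∈ S J := by
    intro i
    have : i ∈ M.biUnion S := hbUeq ▸ Finset.mem_univ i
    obtain ⟨J, hJ, hiJ⟩ := Finset.mem_biUnion.mp this
    exact ⟨J, hJ, hiJ⟩
  choose ι hι1 hι2 using hcover
  have hsingle : ∀ i, S (ι i) = {i} := by
    intro i
    obtain ⟨a, ha⟩ := Finset.card_eq_one.mp (hone (ι i) (hι1 i))
    have := hι2 i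
    rw [ha] at this ⊢
    rw [Finset.mem_singleton.mp this]
  have hself : ∀ i, i ∈ (ι i).1 := fun i => (Finset.mem_sdiff.mp (hι2 i)).1
  have hnmu : ∀ i, i ∉ mu P M (ι i).1 := fun i => (Finset.mem_sdiff.mp (hι2 i)).2
  have ιinj : Function.Injective ι := by
    intro i j h
    have : S (ι i) = S (ι j) := by rw [h]
    rw [hsingle i, hsingle j] at this
    exact Finset.singleton_injective this
  have hkey : ∀ (i : Fin n) (J : ConnIdeal P), J ∈ M → (i ∈ J.1 ↔ (ι i).1 ⊆ J.1) := by
    intro i J hJ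
    constructor
    · intro hiJ
      rcases indep_nested P h1 (hι1 i) hJ (hself i) hiJ with hc | hc
      · exact hc
      · by_cases heq : J.1 = (ι i).1
        · rw [heq]
        · exact absurd
            (subset_mu P hJ (Finset.ssubset_iff_subset_ne.mpr ⟨hc, heq⟩) hiJ) (hnmu i)
    · intro hsub
      exact hsub (hself i)
  let Fpo : PartialOrder (Fin n) :=
    { le := fun i j => (ι i).1 ⊆ (ι j).1
      lt := fun i j => (ι i).1 ⊆ (ι j).1 ∧ ¬ (ι j).1 ⊆ (ι i).1
      lt_iff_le_not_ge := fun _ _ => Iff.rfl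
      le_refl := fun i => Finset.Subset.refl _
      le_trans := fun i j k hij hjk => Finset.Subset.trans hij hjk
      le_antisymm := fun i j hij hji => ιinj (Subtype.ext (Finset.Subset.antisymm hij hji)) }
  have hle : ∀ i j, Fpo.le i j ↔ (ι i).1 ⊆ (ι j).1 := fun i j => Iff.rfl
  have hlam : ∀ i, LamRel Fpo.le i = (ι i).1 := by
    intro i
    ext j
    simp only [LamRel, Finset.mem_filter, Finset.mem_univ, true_and]
    rw [hle]
    exact (hkey j (ι i) (hι1 i)).symm
  have hlt : ∀ i j, ltRel Fpo.le i j ↔ (ι i).1 ⊂ (ι j).1 := by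
    intro i j
    rw [Finset.ssubset_def]
    constructor
    · rintro ⟨hij, hne⟩
      exact ⟨hij, fun h => hne (ιinj (Subtype.ext (Finset.Subset.antisymm hij h)))⟩
    · rintro ⟨hij, hns⟩
      exact ⟨hij, fun he => hns (by rw [he])⟩
  have hforest : IsPForestRel P Fpo.le := by
    refine ⟨Fpo.le_refl, Fpo.le_trans, Fpo.le_antisymm, ?_, ?_, ?_⟩
    · -- forest
      intro i j k hj hk
      by_cases hjk : ι j = ι k
      · exact ιinj hjk
      have hvne : (ι j).1 ≠ (ι k).1 := fun h => hjk (Subtype.ext h)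
      have hij : (ι i).1 ⊂ (ι j).1 := (hlt i j).mp hj.1
      have hik : (ι i).1 ⊂ (ι k).1 := (hlt i k).mp hk.1
      have hiJ : i ∈ (ι j).1 := hij.subset (hself i)
      have hiK : i ∈ (ι k).1 := hik.subset (hself i)
      rcases indep_nested P h1 (hι1 j) (hι1 k) hiJ hiK with hc | hc
      · exact absurd ((hlt j k).mpr ⟨hc, fun h => hvne (Finset.Subset.antisymm hc h)⟩)
          (hk.2 j hj.1)
      · exact absurd ((hlt k j).mpr ⟨hc, fun h => hvne (Finset.Subset.antisymm h hc)⟩)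
          (hj.2 k hk.1)
    · -- connIdeal
      intro i
      rw [hlam i]
      exact (ι i).2
    · -- disc
      intro i j hij hji
      have hdisjij : ∀ x ∈ (ι i).1, x ∉ (ι j).1 := by
        intro x hx1 hx2
        rcases indep_nested P h1 (hι1 i) (hι1 j) hx1 hx2 with hc | hc
        · exact hij hc
        · exact hji hc
      rw [hlam i, hlam j]
      constructor
      · intro x hx y hy
        rcases Finset.mem_union.mp hx with hc | hc
        · exact Finset.mem_union_left _ ((ι i).2.1 x hc y hy)
        · exact Finset.mem_union_right _ ((ι j).2.1 x hc y hy)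
      · exact union_disconnected P (ι i).2.1 (ι j).2.1 hdisjij
          ⟨i, hself i⟩ ⟨j, hself j⟩
  refine ⟨⟨Fpo, hforest⟩, ?_⟩
  have him : Finset.univ.image
      (fun i : Fin n => (⟨LamRel Fpo.le i, hforest.connIdeal i⟩ : ConnIdeal P)) =
      Finset.univ.image ι := by
    apply Finset.image_congr
    intro i _
    exact Subtype.ext (hlam i)
  show Finset.univ.image
      (fun i : Fin n => (⟨LamRel Fpo.le i, hforest.connIdeal i⟩ : ConnIdeal P)) = M
  rw [him]
  apply Finset.eq_of_subset_of_card_le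
  · intro x hx
    obtain ⟨i, _, rfl⟩ := Finset.mem_image.mp hx
    exact hι1 i
  · rw [Finset.card_image_of_injective _ ιinj, Finset.card_univ, Fintype.card_fin, hcard]

end AuxLemmas
/-- Theorem 1.1: the map `Φ` sending a `P`-forest `F` to the
set of its principal order ideals `{Λ_1^F, …, Λ_n^F}` is a bijection from the
set of `P`-forests onto the set of maximum independent sets of `G_P`. -/
theorem statement_0 (n : ℕ) (P : PartialOrder (Fin n)) :
    Set.BijOn
      (fun F : {F : PartialOrder (Fin n) // IsPForestRel P F.le} =>
        Finset.univ.image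
          (fun i : Fin n => (⟨LamRel F.1.le i, F.2.connIdeal i⟩ : ConnIdeal P)))
      Set.univ
      {M : Finset (ConnIdeal P) | IsMaxIndep (GP P) M} := by
  refine ⟨?_, ?_, ?_⟩
  · -- MapsTo
    intro F _
    show IsMaxIndep (GP P) _
    rw [isMaxIndep_iff]
    refine ⟨phi_indep P F.2, ?_⟩
    rw [Finset.card_image_of_injective _ (phi_inj P F.2), Finset.card_univ,
      Fintype.card_fin]
  · -- InjOn
    intro F _ F' _ h
    dsimp only at h
    have h12 := lam_subset_of_image_eq P F.2 F'.2 h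
    have h21 := lam_subset_of_image_eq P F'.2 F.2 h.symm
    have hlam : ∀ i, LamRel F.1.le i = LamRel F'.1.le i :=
      fun i => Finset.Subset.antisymm (h21 i) (h12 i)
    apply Subtype.ext
    apply PartialOrder.ext
    intro x y
    show F.1.le x y ↔ F'.1.le x y
    rw [← mem_lamRel (le := F.1.le), hlam y, mem_lamRel]
  · -- SurjOn
    intro M hM
    have hM' := (isMaxIndep_iff P).mp hM
    obtain ⟨F, hF⟩ := exists_forest P hM'.1 hM'.2
    exact ⟨F, Set.mem_univ F, hF⟩
end
end

section
/- Suppose P is a naturally labeled finite poset on {1,…,n} and G_P has connected components C_1, …, C_h. Let M_r be a maximum independent set of C_r for some 1 ≤ r ≤ h. Then for any two maximum independent sets M¹, M² of G_P satisfying M¹ ∩ V(C_r) = M² ∩ V(C_r) = M_r, one has Des(M_r, M¹) = Des(M_r, M²) and Des̄(M_r, M¹) = Des̄(M_r, M²). -/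
attribute [local instance] Classical.propDecidable

noncomputable section

open Finset

variable {n : ℕ}

namespace Stmt1Aux

variable {n : ℕ} (P : PartialOrder (Fin n))

/-- One comparability step inside a finset `S`. -/
def stp (S : Finset (Fin n)) (x y : Fin n) : Prop :=
  x ∈ S ∧ y ∈ S ∧ x ≠ y ∧ (P.le x y ∨ P.le y x)

/-- Reachability inside a finset `S` via comparabilities. -/
def rch (S : Finset (Fin n)) (a b : Fin n) : Prop :=
  Relation.ReflTransGen (stp P S) a b

variable {P}

lemma stp.symm {S : Finset (Fin n)} {x y : Fin n} (h : stp P S x y) : stp P S y x :=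
  ⟨h.2.1, h.1, h.2.2.1.symm, h.2.2.2.symm⟩

lemma rch.symm {S : Finset (Fin n)} {a b : Fin n} (h : rch P S a b) : rch P S b a := by
  induction h with
  | refl => exact Relation.ReflTransGen.refl
  | tail _ hstep ih => exact Relation.ReflTransGen.head hstep.symm ih

lemma rch.mono {S T : Finset (Fin n)} (hST : S ⊆ T) {a b : Fin n} (h : rch P S a b) :
    rch P T a b := by
  induction h with
  | refl => exact Relation.ReflTransGen.refl
  | tail _ hstep ih =>
      exact ih.tail ⟨hST hstep.1, hST hstep.2.1, hstep.2.2⟩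

lemma rch.mem_right {S : Finset (Fin n)} {a b : Fin n} (h : rch P S a b) (ha : a ∈ S) :
    b ∈ S := by
  induction h with
  | refl => exact ha
  | tail _ hstep _ => exact hstep.2.1

private lemma walk_to_rch {S : Finset (Fin n)} :
    ∀ (u v : (↑S : Set (Fin n))), ((compGraph P).induce (↑S : Set (Fin n))).Walk u v →
      rch P S u.1 v.1 := by
  intro u v w
  induction w with
  | nil => exact Relation.ReflTransGen.refl
  | @cons a b c hadj p ih =>
      have hadj' : (compGraph P).Adj a.1 b.1 := hadj
      exact Relation.ReflTransGen.head
        ⟨by simpa using a.2, by simpa using b.2, hadj'.1, hadj'.2⟩ ih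

/-- Bridge between `JConn` and `rch`. -/
lemma jconn_iff {S : Finset (Fin n)} :
    JConn P S ↔ (S.Nonempty ∧ ∀ a ∈ S, ∀ b ∈ S, rch P S a b) := by
  constructor
  · intro h
    have hne : S.Nonempty := by
      obtain ⟨⟨v, hv⟩⟩ := h.nonempty
      exact ⟨v, by simpa using hv⟩
    refine ⟨hne, fun a ha b hb => ?_⟩
    obtain ⟨w⟩ := h.preconnected ⟨a, by simpa using ha⟩ ⟨b, by simpa using hb⟩
    exact walk_to_rch _ _ w
  · rintro ⟨⟨v, hv⟩, h⟩
    haveI : Nonempty (↑S : Set (Fin n)) := ⟨⟨v, by simpa using hv⟩⟩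
    refine SimpleGraph.Connected.mk ?_
    intro a b
    have hr : rch P S a.1 b.1 := h a.1 (by simpa using a.2) b.1 (by simpa using b.2)
    have key : ∀ x y : Fin n, rch P S x y → ∀ hx : x ∈ S, ∀ hy : y ∈ S,
        ((compGraph P).induce (↑S : Set (Fin n))).Reachable ⟨x, by simpa using hx⟩
          ⟨y, by simpa using hy⟩ := by
      intro x y hxy
      induction hxy with
      | refl => intro hx hy; rfl
      | @tail c d hxc hcd ih =>
          intro hx hy
          have hrc := ih hx hcd.1
          have hadj : ((compGraph P).induce (↑S : Set (Fin n))).Adj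
              ⟨c, by simpa using hcd.1⟩ ⟨d, by simpa using hcd.2.1⟩ :=
            ⟨hcd.2.2.1, hcd.2.2.2⟩
          exact hrc.trans hadj.reachable
    have := key a.1 b.1 hr (by simpa using a.2) (by simpa using b.2)
    convert this <;> simp

end Stmt1Aux

namespace Stmt1Aux


variable {n : ℕ} {P : PartialOrder (Fin n)}

lemma plt_of_le_ne {a b : Fin n} (h : P.le a b) (hne : a ≠ b) : P.lt a b :=
  (P.lt_iff_le_not_ge a b).2 ⟨h, fun h' => hne (P.le_antisymm a b h h')⟩

lemma plt_le {a b : Fin n} (h : P.lt a b) : P.le a b :=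
  ((P.lt_iff_le_not_ge a b).1 h).1

lemma plt_ne {a b : Fin n} (h : P.lt a b) : a ≠ b := by
  rintro rfl
  exact ((P.lt_iff_le_not_ge a a).1 h).2 (P.le_refl a)


/-- `x` is a `P`-maximal element of `S`. -/
def MaxIn (P : PartialOrder (Fin n)) (S : Finset (Fin n)) (x : Fin n) : Prop :=
  ∀ y ∈ S, ¬ P.lt x y

lemma isIdeal_sdiff_singleton {S : Finset (Fin n)} {x : Fin n}
    (hS : IsIdeal P S) (hx : MaxIn P S x) : IsIdeal P (S \ {x}) := by
  intro i hi j hji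
  rcases Finset.mem_sdiff.1 hi with ⟨hiS, hix⟩
  have hjS : j ∈ S := hS i hiS j hji
  refine Finset.mem_sdiff.2 ⟨hjS, ?_⟩
  simp only [Finset.mem_singleton]
  rintro rfl
  rcases eq_or_ne j i with rfl | hne
  · exact hix (by simp)
  · exact hx i hiS (plt_of_le_ne hji hne)

lemma isIdeal_union {S T : Finset (Fin n)} (hS : IsIdeal P S) (hT : IsIdeal P T) :
    IsIdeal P (S ∪ T) := by
  intro i hi j hji
  rcases Finset.mem_union.1 hi with h | h
  · exact Finset.mem_union_left _ (hS i h j hji)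
  · exact Finset.mem_union_right _ (hT i h j hji)

lemma mem_pIdeal {i j : Fin n} : j ∈ PIdeal P i ↔ P.le j i := by
  simp [PIdeal]

lemma isIdeal_pIdeal (i : Fin n) : IsIdeal P (PIdeal P i) := by
  intro a ha j hj
  exact mem_pIdeal.2 (P.le_trans _ _ _ hj (mem_pIdeal.1 ha))

lemma rch_pIdeal {i a : Fin n} (ha : a ∈ PIdeal P i) : rch P (PIdeal P i) a i := by
  rcases eq_or_ne a i with rfl | hne
  · exact Relation.ReflTransGen.refl
  · exact Relation.ReflTransGen.single
      ⟨ha, mem_pIdeal.2 (P.le_refl i), hne, Or.inl (mem_pIdeal.1 ha)⟩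

lemma connIdeal_pIdeal (i : Fin n) : IsConnIdeal P (PIdeal P i) := by
  refine ⟨isIdeal_pIdeal i, jconn_iff.2 ⟨⟨i, mem_pIdeal.2 (P.le_refl i)⟩, ?_⟩⟩
  intro a ha b hb
  exact (rch_pIdeal ha).trans (rch_pIdeal hb).symm

/-- The connected component of `v` inside `S`. -/
def cpt (P : PartialOrder (Fin n)) (S : Finset (Fin n)) (v : Fin n) : Finset (Fin n) :=
  S.filter (fun w => rch P S v w)

lemma mem_cpt {S : Finset (Fin n)} {v w : Fin n} :
    w ∈ cpt P S v ↔ w ∈ S ∧ rch P S v w := Finset.mem_filter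

lemma self_mem_cpt {S : Finset (Fin n)} {v : Fin n} (hv : v ∈ S) : v ∈ cpt P S v :=
  mem_cpt.2 ⟨hv, Relation.ReflTransGen.refl⟩

lemma cpt_subset {S : Finset (Fin n)} {v : Fin n} : cpt P S v ⊆ S :=
  Finset.filter_subset _ _

lemma cpt_closed {S : Finset (Fin n)} {v a b : Fin n}
    (ha : a ∈ cpt P S v) (hstep : stp P S a b) : b ∈ cpt P S v :=
  mem_cpt.2 ⟨hstep.2.1, (mem_cpt.1 ha).2.tail hstep⟩

/-- A connected subset of `S` meeting `cpt P S v` is contained in it. -/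
lemma subset_cpt_of_rch {S T : Finset (Fin n)} {v a : Fin n}
    (hTS : T ⊆ S) (ha : a ∈ cpt P S v)
    (hconn : ∀ b ∈ T, rch P T a b) : T ⊆ cpt P S v := by
  intro b hb
  have hr : rch P S a b := (hconn b hb).mono hTS
  exact mem_cpt.2 ⟨hTS hb, (mem_cpt.1 ha).2.trans hr⟩

lemma isIdeal_cpt {S : Finset (Fin n)} {v : Fin n} (hS : IsIdeal P S) :
    IsIdeal P (cpt P S v) := by
  intro i hi j hji
  rcases mem_cpt.1 hi with ⟨hiS, hr⟩
  have hjS : j ∈ S := hS i hiS j hji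
  rcases eq_or_ne j i with rfl | hne
  · exact hi
  · exact mem_cpt.2 ⟨hjS, hr.tail ⟨hiS, hjS, hne.symm, Or.inr hji⟩⟩

lemma rch_cpt_of_rch {S : Finset (Fin n)} {v b : Fin n} (hb : b ∈ cpt P S v) :
    rch P (cpt P S v) v b := by
  rcases mem_cpt.1 hb with ⟨hbS, hr⟩
  clear hb
  induction hr with
  | refl => exact Relation.ReflTransGen.refl
  | @tail c d hvc hcd ih =>
      have hc : c ∈ cpt P S v := mem_cpt.2 ⟨hcd.1, hvc⟩
      have hd : d ∈ cpt P S v := cpt_closed hc hcd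
      exact (ih (mem_cpt.1 hc).1).tail ⟨hc, hd, hcd.2.2⟩

lemma connIdeal_cpt {S : Finset (Fin n)} {v : Fin n} (hS : IsIdeal P S) (hv : v ∈ S) :
    IsConnIdeal P (cpt P S v) := by
  refine ⟨isIdeal_cpt hS, jconn_iff.2 ⟨⟨v, self_mem_cpt hv⟩, ?_⟩⟩
  intro a ha b hb
  exact (rch_cpt_of_rch ha).symm.trans (rch_cpt_of_rch hb)

/-- Boundary lemma: a connected set `p` with a nonempty proper "ideal part" `J`
has a boundary comparability going up out of `J`. -/
lemma boundary {p J : Finset (Fin n)} (hpc : ∀ a ∈ p, ∀ b ∈ p, rch P p a b)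
    (hJp : J ⊆ p) (hJid : IsIdeal P J) (hne : J.Nonempty) (hsub : p ≠ J)
    (hpid : IsIdeal P p) :
    ∃ v ∈ J, ∃ u ∈ p \ J, P.lt v u := by
  obtain ⟨j, hj⟩ := hne
  have : ∃ q ∈ p, q ∉ J := by
    by_contra hcon
    push_neg at hcon
    exact hsub (Finset.Subset.antisymm (fun a ha => hcon a ha) hJp)
  obtain ⟨q, hq, hqJ⟩ := this
  have hr : rch P p j q := hpc j (hJp hj) q hq
  -- induct: along the chain from j to q, find the first exit from J
  have key : ∀ a b : Fin n, rch P p a b → a ∈ J → b ∉ J →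
      ∃ v ∈ J, ∃ u ∈ p \ J, P.lt v u := by
    intro a b hab
    induction hab with
    | refl => intro h1 h2; exact absurd h1 h2
    | @tail c d hac hcd ih =>
        intro ha hd
        by_cases hc : c ∈ J
        · -- boundary step c ~ d
          refine ⟨c, hc, d, Finset.mem_sdiff.2 ⟨hcd.2.1, hd⟩, ?_⟩
          rcases hcd.2.2.2 with h | h
          · exact plt_of_le_ne h (fun he => hd (he ▸ hc))
          · exact absurd (hJid c hc d h) hd
        · exact ih ha hc
  exact key j q hr hj hqJ

end Stmt1Aux

namespace Stmt1Aux

variable {n : ℕ} {P : PartialOrder (Fin n)}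

lemma not_nontriv_cases {A B : Finset (Fin n)} (h : ¬ Nontriv A B) :
    A ∩ B = ∅ ∨ A ⊆ B ∨ B ⊆ A := by
  by_contra hcon
  push_neg at hcon
  exact h ⟨hcon.1, hcon.2.1, hcon.2.2⟩

lemma not_adj_of_not_reachable {A B : ConnIdeal P} (h : ¬ (GP P).Reachable A B) :
    ¬ (GP P).Adj A B := fun hadj => h hadj.reachable

lemma cases_of_not_reachable {A B : ConnIdeal P} (h : ¬ (GP P).Reachable A B) :
    A.1 ∩ B.1 = ∅ ∨ A.1 ⊆ B.1 ∨ B.1 ⊆ A.1 :=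
  not_nontriv_cases (not_adj_of_not_reachable h)

/-- Propagation: if `A ⊆ K` with `K` unreachable from `A`, then everything
reachable from `A` is contained in `K`. -/
private lemma propagation_aux {K : ConnIdeal P} :
    ∀ (a b : ConnIdeal P), (GP P).Walk a b → a.1 ⊆ K.1 → ¬ (GP P).Reachable a K →
      b.1 ⊆ K.1 := by
  intro a b w
  induction w with
  | nil => exact fun h _ => h
  | @cons a b c hadj p ih =>
      intro hAK hnr
      have hnrb : ¬ (GP P).Reachable b K := fun hr => hnr (hadj.reachable.trans hr)
      have hbK : b.1 ⊆ K.1 := by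
        rcases cases_of_not_reachable hnrb with hdisj | hsub | hsup
        · obtain ⟨x, hx⟩ := hadj.1
          rcases Finset.mem_inter.1 hx with ⟨hxa, hxb⟩
          have : x ∈ b.1 ∩ K.1 := Finset.mem_inter.2 ⟨hxb, hAK hxa⟩
          simp [hdisj] at this
        · exact hsub
        · exact absurd (fun y hy => hsup (hAK hy)) hadj.2.1
      exact ih hbK hnrb

/-- Propagation: if `A ⊆ K` with `K` unreachable from `A`, then everything
reachable from `A` is contained in `K`. -/
lemma propagation {A K B : ConnIdeal P} (hAK : A.1 ⊆ K.1)
    (hnr : ¬ (GP P).Reachable A K) (hAB : (GP P).Reachable A B) : B.1 ⊆ K.1 := by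
  obtain ⟨w⟩ := hAB
  exact propagation_aux A B w hAK hnr

lemma exists_neighbor_of_reachable_ne {A B : ConnIdeal P}
    (h : (GP P).Reachable A B) (hne : A ≠ B) : ∃ C, (GP P).Adj A C := by
  obtain ⟨w⟩ := h
  cases w with
  | nil => exact absurd rfl hne
  | cons hadj p => exact ⟨_, hadj⟩

lemma reachable_self_of_mem_supp {c : (GP P).ConnectedComponent} {A B : ConnIdeal P}
    (hA : A ∈ c.supp) (hB : B ∈ c.supp) : (GP P).Reachable A B := by
  rw [SimpleGraph.ConnectedComponent.mem_supp_iff] at hA hB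
  exact (SimpleGraph.ConnectedComponent.eq).1 (hA.trans hB.symm)

lemma mem_supp_of_reachable {c : (GP P).ConnectedComponent} {A B : ConnIdeal P}
    (hA : A ∈ c.supp) (h : (GP P).Reachable A B) : B ∈ c.supp := by
  rw [SimpleGraph.ConnectedComponent.mem_supp_iff] at hA ⊢
  rw [← hA]
  exact (SimpleGraph.ConnectedComponent.eq).2 h.symm

end Stmt1Aux

namespace Stmt1Aux

variable {n : ℕ} {P : PartialOrder (Fin n)} {M : Finset (ConnIdeal P)}

lemma gp_adj_iff {A B : ConnIdeal P} : (GP P).Adj A B ↔ Nontriv A.1 B.1 := Iff.rfl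

lemma connIdeal_nonempty (J : ConnIdeal P) : J.1.Nonempty := (jconn_iff.1 J.2.2).1

lemma laminar (hind : IsIndep (GP P) M) {A B : ConnIdeal P} (hA : A ∈ M) (hB : B ∈ M) :
    A.1 ∩ B.1 = ∅ ∨ A.1 ⊆ B.1 ∨ B.1 ⊆ A.1 :=
  not_nontriv_cases (hind A hA B hB)

lemma mem_mu {J : Finset (Fin n)} {y : Fin n} :
    y ∈ mu P M J ↔ ∃ Z ∈ M, Z.1 ⊂ J ∧ y ∈ Z.1 := by
  simp only [mu, Finset.mem_biUnion, Finset.mem_filter]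
  tauto

lemma subset_mu {J : Finset (Fin n)} {Z : ConnIdeal P} (hZ : Z ∈ M) (h : Z.1 ⊂ J) :
    Z.1 ⊆ mu P M J := fun y hy => mem_mu.2 ⟨Z, hZ, h, hy⟩

lemma mem_of_compat (hM : IsMaxIndep (GP P) M) {I : ConnIdeal P}
    (hcompat : ∀ Z ∈ M, I.1 ∩ Z.1 = ∅ ∨ I.1 ⊆ Z.1 ∨ Z.1 ⊆ I.1) : I ∈ M := by
  by_contra hIM
  have hind : IsIndep (GP P) (insert I M) := by
    intro a ha b hb
    have notadj : ∀ Z ∈ M, ¬ (GP P).Adj I Z := by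
      intro Z hZ hadj
      rcases hcompat Z hZ with h | h | h
      · rcases hadj.1 with ⟨y, hy⟩
        simp [h] at hy
      · exact hadj.2.1 h
      · exact hadj.2.2 h
    rcases Finset.mem_insert.1 ha with ha' | haM
    · rcases Finset.mem_insert.1 hb with hb' | hbM
      · rw [ha', hb']
        exact (GP P).loopless.irrefl I
      · rw [ha']
        exact notadj b hbM
    · rcases Finset.mem_insert.1 hb with hb' | hbM
      · rw [hb']
        exact fun hadj => notadj a haM hadj.symm
      · exact hM.1 a haM b hbM
  have hcard := hM.2 _ hind
  rw [Finset.card_insert_of_notMem hIM] at hcard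
  omega

lemma rch_closed {T S : Finset (Fin n)} (hclosed : ∀ a ∈ T, ∀ b, stp P S a b → b ∈ T)
    {a b : Fin n} (h : rch P S a b) (ha : a ∈ T) : b ∈ T := by
  induction h with
  | refl => exact ha
  | tail _ hstep ih => exact hclosed _ ih _ hstep

lemma exists_pmax {S : Finset (Fin n)} (h : S.Nonempty) :
    ∃ x ∈ S, ∀ y ∈ S, ¬ P.lt x y := by
  obtain ⟨x, hx, hmax⟩ := S.exists_max_image (fun x => (PIdeal P x).card) h
  refine ⟨x, hx, fun y hy hlt => ?_⟩
  have hsub : PIdeal P x ⊆ PIdeal P y := fun z hz =>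
    mem_pIdeal.2 (P.le_trans _ _ _ (mem_pIdeal.1 hz) (plt_le hlt))
  have hssub : PIdeal P x ⊂ PIdeal P y := by
    refine Finset.ssubset_iff_of_subset hsub |>.2 ⟨y, mem_pIdeal.2 (P.le_refl y), ?_⟩
    intro hyx
    exact plt_ne hlt (P.le_antisymm _ _ (plt_le hlt) (mem_pIdeal.1 hyx))
  exact absurd (hmax y hy) (not_le.2 (Finset.card_lt_card hssub))

/-- The complement `J \ μ(M,J)` is nonempty for `J ∈ M`. -/
lemma sdiff_mu_nonempty (hM : IsMaxIndep (GP P) M) {J : ConnIdeal P} (hJ : J ∈ M) :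
    (J.1 \ mu P M J.1).Nonempty := by
  rw [Finset.sdiff_nonempty]
  intro hsub
  obtain ⟨v, hv⟩ := connIdeal_nonempty J
  -- maximal member of M strictly below J containing v
  set F : Finset (ConnIdeal P) := M.filter (fun Z => Z.1 ⊂ J.1 ∧ v ∈ Z.1) with hF
  have hFne : F.Nonempty := by
    obtain ⟨Z, hZ, hZJ, hvZ⟩ := mem_mu.1 (hsub hv)
    exact ⟨Z, Finset.mem_filter.2 ⟨hZ, hZJ, hvZ⟩⟩
  obtain ⟨Z₀, hZ₀F, hmax⟩ := F.exists_max_image (fun Z => Z.1.card) hFne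
  rcases Finset.mem_filter.1 hZ₀F with ⟨hZ₀M, hZ₀J, hvZ₀⟩
  -- Z₀ is closed under steps within J
  have hclosed : ∀ a ∈ Z₀.1, ∀ b, stp P J.1 a b → b ∈ Z₀.1 := by
    intro a ha b hstep
    obtain ⟨Z₁, hZ₁M, hZ₁J, hbZ₁⟩ := mem_mu.1 (hsub hstep.2.1)
    rcases hstep.2.2.2 with hle | hle
    · -- le a b : a ∈ Z₁, so laminar forces relation
      have haZ₁ : a ∈ Z₁.1 := Z₁.2.1 b hbZ₁ a hle
      rcases laminar hM.1 hZ₀M hZ₁M with hdisj | hs | hs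
      · exact absurd (Finset.mem_inter.2 ⟨ha, haZ₁⟩) (by simp [hdisj])
      · -- Z₀ ⊆ Z₁ : maximality forces Z₀ = Z₁
        have hZ₁F : Z₁ ∈ F := Finset.mem_filter.2 ⟨hZ₁M, hZ₁J, hs hvZ₀⟩
        have := Finset.eq_of_subset_of_card_le hs (hmax Z₁ hZ₁F)
        rw [this]
        exact hbZ₁
      · exact hs hbZ₁
    · exact Z₀.2.1 a ha b hle
  have hJZ₀ : J.1 ⊆ Z₀.1 := by
    intro b hb
    have hr : rch P J.1 v b := (jconn_iff.1 J.2.2).2 v hv b hb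
    exact rch_closed hclosed hr hvZ₀
  exact (Finset.ssubset_iff_subset_ne.1 hZ₀J).2
    (Finset.Subset.antisymm hZ₀J.1 hJZ₀)

/-- Each component of `J \ {x}` belongs to `M`, when `x` is the label of `J`. -/
lemma cpt_mem (hM : IsMaxIndep (GP P) M) {J : ConnIdeal P} (hJ : J ∈ M) {x : Fin n}
    (hxmu : x ∉ mu P M J.1) (hmax : MaxIn P J.1 x)
    {w : Fin n} (hw : w ∈ J.1 \ {x}) :
    ∃ Z : ConnIdeal P, Z ∈ M ∧ Z.1 = cpt P (J.1 \ {x}) w := by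
  have hid : IsIdeal P (J.1 \ {x}) := isIdeal_sdiff_singleton J.2.1 hmax
  have hci : IsConnIdeal P (cpt P (J.1 \ {x}) w) := connIdeal_cpt hid hw
  set D : ConnIdeal P := ⟨cpt P (J.1 \ {x}) w, hci⟩ with hD
  have hDsub : D.1 ⊆ J.1 \ {x} := cpt_subset
  have hDJ : D.1 ⊆ J.1 := hDsub.trans (Finset.sdiff_subset)
  refine ⟨D, mem_of_compat hM ?_, rfl⟩
  intro Z hZ
  rcases laminar hM.1 hJ hZ with hdisj | hs | hs
  · -- J ∩ Z = ∅
    left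
    rw [Finset.eq_empty_iff_forall_notMem]
    intro y hy
    rcases Finset.mem_inter.1 hy with ⟨hyD, hyZ⟩
    exact absurd (Finset.mem_inter.2 ⟨hDJ hyD, hyZ⟩) (by simp [hdisj])
  · -- J ⊆ Z
    right; left
    exact hDJ.trans hs
  · -- Z ⊆ J
    rcases eq_or_ne Z.1 J.1 with heq | hne
    · right; left
      exact heq ▸ hDJ
    · have hZJ : Z.1 ⊂ J.1 := Finset.ssubset_iff_subset_ne.2 ⟨hs, hne⟩
      have hZx : Z.1 ⊆ J.1 \ {x} := by
        intro y hy
        refine Finset.mem_sdiff.2 ⟨hs hy, ?_⟩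
        simp only [Finset.mem_singleton]
        rintro rfl
        exact hxmu (subset_mu hZ hZJ hy)
      by_cases hmeet : (Z.1 ∩ D.1).Nonempty
      · right; right
        obtain ⟨a, ha⟩ := hmeet
        rcases Finset.mem_inter.1 ha with ⟨haZ, haD⟩
        exact subset_cpt_of_rch hZx haD (fun b hb => (jconn_iff.1 Z.2.2).2 a haZ b hb)
      · left
        rw [Finset.eq_empty_iff_forall_notMem]
        intro y hy
        exact hmeet ⟨y, Finset.mem_inter.2 ⟨(Finset.mem_inter.1 hy).2,
          (Finset.mem_inter.1 hy).1⟩⟩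

/-- Existence of the label: `J \ μ(M, J) = {x}` with `x` maximal in `J`. -/
lemma label_spec (hM : IsMaxIndep (GP P) M) {J : ConnIdeal P} (hJ : J ∈ M) :
    ∃ x, J.1 \ mu P M J.1 = {x} ∧ MaxIn P J.1 x := by
  obtain ⟨x, hx, hxmax⟩ := exists_pmax (P := P) (sdiff_mu_nonempty hM hJ)
  rcases Finset.mem_sdiff.1 hx with ⟨hxJ, hxmu⟩
  have hmaxJ : MaxIn P J.1 x := by
    intro y hy hlt
    by_cases hymu : y ∈ mu P M J.1
    · obtain ⟨Z, hZ, hZJ, hyZ⟩ := mem_mu.1 hymu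
      exact hxmu (subset_mu hZ hZJ (Z.2.1 y hyZ x (plt_le hlt)))
    · exact hxmax y (Finset.mem_sdiff.2 ⟨hy, hymu⟩) hlt
  refine ⟨x, ?_, hmaxJ⟩
  apply Finset.Subset.antisymm
  · intro w hw
    rcases Finset.mem_sdiff.1 hw with ⟨hwJ, hwmu⟩
    simp only [Finset.mem_singleton]
    by_contra hne
    have hw' : w ∈ J.1 \ {x} := Finset.mem_sdiff.2 ⟨hwJ, by simpa using hne⟩
    obtain ⟨Z, hZM, hZeq⟩ := cpt_mem hM hJ hxmu hmaxJ hw'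
    have hZJ : Z.1 ⊂ J.1 := by
      rw [hZeq]
      refine Finset.ssubset_iff_subset_ne.2
        ⟨cpt_subset.trans Finset.sdiff_subset, ?_⟩
      intro heq
      have : x ∈ cpt P (J.1 \ {x}) w := heq.symm ▸ hxJ
      have := cpt_subset this
      simp at this
    exact hwmu (subset_mu hZM hZJ (hZeq.symm ▸ self_mem_cpt hw'))
  · intro w hw
    rw [Finset.mem_singleton] at hw
    subst hw
    exact hx

lemma label_mem {J : ConnIdeal P} {x : Fin n} (h : J.1 \ mu P M J.1 = {x}) :
    x ∈ J.1 ∧ x ∉ mu P M J.1 := by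
  have : x ∈ J.1 \ mu P M J.1 := h ▸ Finset.mem_singleton_self x
  exact Finset.mem_sdiff.1 this

lemma label_inj (hM : IsMaxIndep (GP P) M) {J K : ConnIdeal P} {x : Fin n}
    (hJ : J ∈ M) (hK : K ∈ M) (hJx : J.1 \ mu P M J.1 = {x})
    (hKx : K.1 \ mu P M K.1 = {x}) : J = K := by
  have hxJ := label_mem hJx
  have hxK := label_mem hKx
  by_contra hne
  have hne' : J.1 ≠ K.1 := fun h => hne (Subtype.ext h)
  rcases laminar hM.1 hJ hK with hdisj | hs | hs
  · exact absurd (Finset.mem_inter.2 ⟨hxJ.1, hxK.1⟩) (by simp [hdisj])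
  · exact hxK.2 (subset_mu hJ (Finset.ssubset_iff_subset_ne.2 ⟨hs, hne'⟩) hxJ.1)
  · exact hxJ.2 (subset_mu hK (Finset.ssubset_iff_subset_ne.2 ⟨hs, hne'.symm⟩) hxK.1)

end Stmt1Aux

namespace Stmt1Aux

variable {n : ℕ} {P : PartialOrder (Fin n)} {M : Finset (ConnIdeal P)}

/-- Every element is covered by some member of a maximum independent set. -/
lemma exists_mem_cover (hM : IsMaxIndep (GP P) M) (i : Fin n) :
    ∃ Z ∈ M, i ∈ Z.1 := by
  set F : Finset (ConnIdeal P) :=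
    M.filter (fun Z => (Z.1 ∩ PIdeal P i).Nonempty) with hF
  set I : Finset (Fin n) := PIdeal P i ∪ F.biUnion (fun Z => Z.1) with hI
  have hPI : PIdeal P i ⊆ I := Finset.subset_union_left
  have hFI : ∀ Z ∈ F, Z.1 ⊆ I := fun Z hZ =>
    (Finset.subset_biUnion_of_mem (fun Z => Z.1) hZ).trans Finset.subset_union_right
  have hiI : i ∈ I := hPI (mem_pIdeal.2 (P.le_refl i))
  have hid : IsIdeal P I := by
    intro a ha j hj
    rcases Finset.mem_union.1 ha with h | h
    · exact hPI (isIdeal_pIdeal i a h j hj)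
    · rcases Finset.mem_biUnion.1 h with ⟨Z, hZ, haZ⟩
      exact hFI Z hZ (Z.2.1 a haZ j hj)
  have hrchI : ∀ a ∈ I, rch P I a i := by
    intro a ha
    rcases Finset.mem_union.1 ha with h | h
    · exact (rch_pIdeal h).mono hPI
    · rcases Finset.mem_biUnion.1 h with ⟨Z, hZ, haZ⟩
      obtain ⟨y, hy⟩ := (Finset.mem_filter.1 hZ).2
      rcases Finset.mem_inter.1 hy with ⟨hyZ, hyP⟩
      have h1 : rch P I a y := ((jconn_iff.1 Z.2.2).2 a haZ y hyZ).mono (hFI Z hZ)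
      exact h1.trans ((rch_pIdeal hyP).mono hPI)
  have hconn : JConn P I := by
    refine jconn_iff.2 ⟨⟨i, hiI⟩, fun a ha b hb => ?_⟩
    exact (hrchI a ha).trans (hrchI b hb).symm
  set Ic : ConnIdeal P := ⟨I, hid, hconn⟩ with hIc
  have hcompat : ∀ Z ∈ M, Ic.1 ∩ Z.1 = ∅ ∨ Ic.1 ⊆ Z.1 ∨ Z.1 ⊆ Ic.1 := by
    intro Z hZ
    by_cases hZF : Z ∈ F
    · exact Or.inr (Or.inr (hFI Z hZF))
    · by_cases hmeet : (Ic.1 ∩ Z.1).Nonempty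
      · obtain ⟨y, hy⟩ := hmeet
        rcases Finset.mem_inter.1 hy with ⟨hyI, hyZ⟩
        rcases Finset.mem_union.1 hyI with h | h
        · exact absurd (Finset.mem_filter.2 ⟨hZ, ⟨y, Finset.mem_inter.2 ⟨hyZ, h⟩⟩⟩) hZF
        · rcases Finset.mem_biUnion.1 h with ⟨Z', hZ', hyZ'⟩
          rcases laminar hM.1 hZ (Finset.mem_filter.1 hZ').1 with hdisj | hs | hs
          · exact absurd (Finset.mem_inter.2 ⟨hyZ, hyZ'⟩) (by simp [hdisj])
          · exact Or.inr (Or.inr (hs.trans (hFI Z' hZ')))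
          · -- Z' ⊆ Z : then Z meets PIdeal P i, so Z ∈ F, contradiction
            obtain ⟨w, hw⟩ := (Finset.mem_filter.1 hZ').2
            rcases Finset.mem_inter.1 hw with ⟨hwZ', hwP⟩
            exact absurd (Finset.mem_filter.2
              ⟨hZ, ⟨w, Finset.mem_inter.2 ⟨hs hwZ', hwP⟩⟩⟩) hZF
      · exact Or.inl (Finset.not_nonempty_iff_eq_empty.1 hmeet)
  exact ⟨Ic, mem_of_compat hM hcompat, hiI⟩

/-- `p` is the parent of `J` in `M`. -/
def IsPar (M : Finset (ConnIdeal P)) (J p : ConnIdeal P) : Prop :=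
  p ∈ M ∧ J.1 ⊂ p.1 ∧ ∀ Z ∈ M, J.1 ⊂ Z.1 → p.1 ⊆ Z.1

lemma exists_isPar (hM : IsMaxIndep (GP P) M) {J : ConnIdeal P}
    (h : ∃ Z ∈ M, J.1 ⊂ Z.1) : ∃ p, IsPar M J p := by
  set F : Finset (ConnIdeal P) := M.filter (fun Z => J.1 ⊂ Z.1) with hF
  have hFne : F.Nonempty := by
    obtain ⟨Z, hZ, hZJ⟩ := h
    exact ⟨Z, Finset.mem_filter.2 ⟨hZ, hZJ⟩⟩
  obtain ⟨p, hpF, hmin⟩ := F.exists_min_image (fun Z => Z.1.card) hFne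
  rcases Finset.mem_filter.1 hpF with ⟨hpM, hpJ⟩
  refine ⟨p, hpM, hpJ, fun Z hZ hZJ => ?_⟩
  rcases laminar hM.1 hpM hZ with hdisj | hs | hs
  · obtain ⟨v, hv⟩ := connIdeal_nonempty J
    exact absurd (Finset.mem_inter.2 ⟨hpJ.1 hv, hZJ.1 hv⟩) (by simp [hdisj])
  · exact hs
  · have hZF : Z ∈ F := Finset.mem_filter.2 ⟨hZ, hZJ⟩
    rw [Finset.eq_of_subset_of_card_le hs (hmin Z hZF)]

lemma isPar_unique {J p q : ConnIdeal P} (hp : IsPar M J p) (hq : IsPar M J q) : p = q :=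
  Subtype.ext (Finset.Subset.antisymm (hp.2.2 q hq.1 hq.2.1) (hq.2.2 p hp.1 hp.2.1))

/-- The unique attachment point: any element of `p \ J` comparable to an element
of `J` is the label of `p`, when `p` is the parent of `J`. -/
lemma attach (hM : IsMaxIndep (GP P) M) {J p : ConnIdeal P} (hJ : J ∈ M)
    (hp : IsPar M J p) {xp : Fin n} (hxp : p.1 \ mu P M p.1 = {xp})
    {u v : Fin n} (hu : u ∈ p.1) (huJ : u ∉ J.1) (hv : v ∈ J.1)
    (hcomp : P.le v u ∨ P.le u v) : u = xp := by
  by_contra hne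
  obtain ⟨x', hx'eq, hx'max⟩ := label_spec hM hp.1
  have hxx' : x' = xp := by
    have := hx'eq.symm.trans hxp
    simpa using this
  rw [hxx'] at hx'max
  have hxmu := label_mem hxp
  have hxpJ : xp ∉ J.1 := fun h => hxmu.2 (subset_mu hJ hp.2.1 h)
  have hle : P.le v u := by
    rcases hcomp with h | h
    · exact h
    · exact absurd (J.2.1 v hv u h) huJ
  have hvu : v ≠ u := fun h => huJ (h ▸ hv)
  have hu' : u ∈ p.1 \ {xp} := Finset.mem_sdiff.2 ⟨hu, by simpa using hne⟩
  have hv' : v ∈ p.1 \ {xp} := Finset.mem_sdiff.2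
    ⟨hp.2.1.1 hv, by simp; rintro rfl; exact hxpJ hv⟩
  obtain ⟨Z, hZM, hZeq⟩ := cpt_mem hM hp.1 hxmu.2 hx'max hu'
  have huZ : u ∈ Z.1 := hZeq.symm ▸ self_mem_cpt hu'
  have hvZ : v ∈ Z.1 := by
    rw [hZeq]
    exact cpt_closed (self_mem_cpt hu') ⟨hu', hv', hvu.symm, Or.inr hle⟩
  have hZsub : Z.1 ⊆ p.1 \ {xp} := hZeq ▸ cpt_subset
  rcases laminar hM.1 hZM hJ with hdisj | hs | hs
  · exact absurd (Finset.mem_inter.2 ⟨hvZ, hv⟩) (by simp [hdisj])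
  · exact huJ (hs huZ)
  · -- J ⊆ Z, J ≠ Z, so J ⊊ Z, and Z ⊊ p, contradicting parent minimality
    have hJZ : J.1 ⊂ Z.1 := Finset.ssubset_iff_subset_ne.2
      ⟨hs, fun h => huJ (h ▸ huZ)⟩
    have := hp.2.2 Z hZM hJZ
    have hxpZ : xp ∈ Z.1 := this hxmu.1
    have := hZsub hxpZ
    simp at this

/-- A member with a neighbor has a strict superset in `M`. -/
lemma exists_superset_of_adj (hM : IsMaxIndep (GP P) M) {J J₂ : ConnIdeal P}
    (hJ : J ∈ M) (hadj : (GP P).Adj J J₂) : ∃ Z ∈ M, J.1 ⊂ Z.1 := by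
  set U : Finset (Fin n) := J.1 ∪ J₂.1 with hU
  have hidU : IsIdeal P U := isIdeal_union J.2.1 J₂.2.1
  obtain ⟨y, hy⟩ := hadj.1
  rcases Finset.mem_inter.1 hy with ⟨hyJ, hyJ₂⟩
  have hrchU : ∀ a ∈ U, ∀ b ∈ U, rch P U a b := by
    have hy1 : ∀ a ∈ U, rch P U a y := by
      intro a ha
      rcases Finset.mem_union.1 ha with h | h
      · exact ((jconn_iff.1 J.2.2).2 a h y hyJ).mono Finset.subset_union_left
      · exact ((jconn_iff.1 J₂.2.2).2 a h y hyJ₂).mono Finset.subset_union_right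
    exact fun a ha b hb => (hy1 a ha).trans (hy1 b hb).symm
  have hUJ : U ≠ J.1 := by
    intro h
    exact hadj.2.2 (fun z hz => h ▸ (Finset.mem_union_right _ hz))
  obtain ⟨v, hv, u, hu, hlt⟩ := boundary hrchU Finset.subset_union_left J.2.1
    (connIdeal_nonempty J) hUJ hidU
  rcases Finset.mem_sdiff.1 hu with ⟨huU, huJ⟩
  obtain ⟨Z, hZM, huZ⟩ := exists_mem_cover hM u
  have hvZ : v ∈ Z.1 := Z.2.1 u huZ v (plt_le hlt)
  rcases laminar hM.1 hJ hZM with hdisj | hs | hs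
  · exact absurd (Finset.mem_inter.2 ⟨hv, hvZ⟩) (by simp [hdisj])
  · exact ⟨Z, hZM, Finset.ssubset_iff_subset_ne.2 ⟨hs, fun h => huJ (h.symm ▸ huZ)⟩⟩
  · exact absurd (hs huZ) huJ

end Stmt1Aux

namespace Stmt1Aux

variable {n : ℕ} {P : PartialOrder (Fin n)} {M : Finset (ConnIdeal P)}

/-- Claim W: a non-isolated member's label cannot lie inside an ideal of a
different connected component contained in it. -/
lemma claimW (hM : IsMaxIndep (GP P) M) {J K J₂ : ConnIdeal P} (hJ : J ∈ M)
    {x : Fin n} (hx : J.1 \ mu P M J.1 = {x})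
    (hxK : x ∈ K.1) (hKJ : K.1 ⊆ J.1) (hnr : ¬ (GP P).Reachable K J)
    (hadj : (GP P).Adj J J₂) : False := by
  obtain ⟨x', hx'eq, hx'max⟩ := label_spec hM hJ
  have hxx' : x' = x := by
    have := hx'eq.symm.trans hx
    simpa using this
  rw [hxx'] at hx'max
  have hxmu := label_mem hx
  -- the ideal I = K ∪ (members inside J\{x} meeting K)
  set F : Finset (ConnIdeal P) :=
    M.filter (fun Z => Z.1 ⊆ J.1 \ {x} ∧ (Z.1 ∩ K.1).Nonempty) with hF
  set I : Finset (Fin n) := K.1 ∪ F.biUnion (fun Z => Z.1) with hI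
  have hKI : K.1 ⊆ I := Finset.subset_union_left
  have hFI : ∀ Z ∈ F, Z.1 ⊆ I := fun Z hZ =>
    (Finset.subset_biUnion_of_mem (fun Z => Z.1) hZ).trans Finset.subset_union_right
  have hIJ : I ⊆ J.1 := by
    intro a ha
    rcases Finset.mem_union.1 ha with h | h
    · exact hKJ h
    · rcases Finset.mem_biUnion.1 h with ⟨Z, hZ, haZ⟩
      exact ((Finset.mem_filter.1 hZ).2.1 haZ |> Finset.mem_sdiff.1).1
  have hxI : x ∈ I := hKI hxK
  have hid : IsIdeal P I := by
    intro a ha j hj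
    rcases Finset.mem_union.1 ha with h | h
    · exact hKI (K.2.1 a h j hj)
    · rcases Finset.mem_biUnion.1 h with ⟨Z, hZ, haZ⟩
      exact hFI Z hZ (Z.2.1 a haZ j hj)
  have hrchI : ∀ a ∈ I, rch P I a x := by
    intro a ha
    rcases Finset.mem_union.1 ha with h | h
    · exact ((jconn_iff.1 K.2.2).2 a h x hxK).mono hKI
    · rcases Finset.mem_biUnion.1 h with ⟨Z, hZ, haZ⟩
      obtain ⟨y, hy⟩ := (Finset.mem_filter.1 hZ).2.2
      rcases Finset.mem_inter.1 hy with ⟨hyZ, hyK⟩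
      have h1 : rch P I a y := ((jconn_iff.1 Z.2.2).2 a haZ y hyZ).mono (hFI Z hZ)
      exact h1.trans (((jconn_iff.1 K.2.2).2 y hyK x hxK).mono hKI)
  have hconn : JConn P I := jconn_iff.2
    ⟨⟨x, hxI⟩, fun a ha b hb => (hrchI a ha).trans (hrchI b hb).symm⟩
  set Ic : ConnIdeal P := ⟨I, hid, hconn⟩ with hIc
  have hcompat : ∀ Z' ∈ M, Ic.1 ∩ Z'.1 = ∅ ∨ Ic.1 ⊆ Z'.1 ∨ Z'.1 ⊆ Ic.1 := by
    intro Z' hZ'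
    rcases laminar hM.1 hZ' hJ with hdisj | hs | hs
    · left
      rw [Finset.eq_empty_iff_forall_notMem]
      intro y hy
      rcases Finset.mem_inter.1 hy with ⟨hyI, hyZ'⟩
      exact absurd (Finset.mem_inter.2 ⟨hyZ', hIJ hyI⟩) (by simp [hdisj])
    · -- Z' ⊆ J
      rcases eq_or_ne Z'.1 J.1 with heq | hne
      · exact Or.inr (Or.inl (heq ▸ hIJ))
      · have hZ'J : Z'.1 ⊂ J.1 := Finset.ssubset_iff_subset_ne.2 ⟨hs, hne⟩
        have hZ'x : Z'.1 ⊆ J.1 \ {x} := by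
          intro y hy
          refine Finset.mem_sdiff.2 ⟨hs hy, ?_⟩
          simp only [Finset.mem_singleton]
          rintro rfl
          exact hxmu.2 (subset_mu hZ' hZ'J hy)
        by_cases hZK : (Z'.1 ∩ K.1).Nonempty
        · exact Or.inr (Or.inr (hFI Z' (Finset.mem_filter.2 ⟨hZ', hZ'x, hZK⟩)))
        · by_cases hmeet : (Ic.1 ∩ Z'.1).Nonempty
          · obtain ⟨y, hy⟩ := hmeet
            rcases Finset.mem_inter.1 hy with ⟨hyI, hyZ'⟩
            rcases Finset.mem_union.1 hyI with h | h
            · exact absurd ⟨y, Finset.mem_inter.2 ⟨hyZ', h⟩⟩ hZK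
            · rcases Finset.mem_biUnion.1 h with ⟨Z, hZ, hyZ⟩
              have hZM := (Finset.mem_filter.1 hZ).1
              rcases laminar hM.1 hZ' hZM with hd | h1 | h2
              · exact absurd (Finset.mem_inter.2 ⟨hyZ', hyZ⟩) (by simp [hd])
              · exact Or.inr (Or.inr ((h1).trans (hFI Z hZ)))
              · obtain ⟨w, hw⟩ := (Finset.mem_filter.1 hZ).2.2
                rcases Finset.mem_inter.1 hw with ⟨hwZ, hwK⟩
                exact absurd ⟨w, Finset.mem_inter.2 ⟨h2 hwZ, hwK⟩⟩ hZK
          · exact Or.inl (Finset.not_nonempty_iff_eq_empty.1 hmeet)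
    · -- J ⊆ Z'
      exact Or.inr (Or.inl (hIJ.trans hs))
  have hIcM : Ic ∈ M := mem_of_compat hM hcompat
  -- I must be all of J
  have hIJeq : Ic.1 = J.1 := by
    rcases eq_or_ne Ic.1 J.1 with h | h
    · exact h
    · exact absurd (subset_mu hIcM (Finset.ssubset_iff_subset_ne.2 ⟨hIJ, h⟩) hxI)
        hxmu.2
  -- covering family of J by ideals reachable to K
  have hcov : ∀ w ∈ J.1, ∃ K' : ConnIdeal P,
      w ∈ K'.1 ∧ K'.1 ⊆ J.1 ∧ (GP P).Reachable K' K := by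
    intro w hw
    have hwI : w ∈ I := by
      have : (Ic.1 : Finset (Fin n)) = J.1 := hIJeq
      rw [show I = Ic.1 from rfl, this]
      exact hw
    rcases Finset.mem_union.1 hwI with h | h
    · exact ⟨K, h, hKJ, SimpleGraph.Reachable.refl K⟩
    · rcases Finset.mem_biUnion.1 h with ⟨Z, hZ, hwZ⟩
      rcases Finset.mem_filter.1 hZ with ⟨hZM, hZsub, hZK⟩
      by_cases hadjZK : (GP P).Adj Z K
      · exact ⟨Z, hwZ, fun a ha => (Finset.mem_sdiff.1 (hZsub ha)).1,
          hadjZK.reachable⟩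
      · rcases not_nontriv_cases hadjZK with hd | h1 | h2
        · obtain ⟨y, hy⟩ := hZK
          simp [hd] at hy
        · -- Z ⊆ K
          exact ⟨K, h1 hwZ, hKJ, SimpleGraph.Reachable.refl K⟩
        · -- K ⊆ Z: then x ∈ Z ⊆ J \ {x}, absurd
          have := hZsub (h2 hxK)
          simp at this
  -- now derive the contradiction with the neighbor J₂
  obtain ⟨y, hy⟩ := hadj.1
  rcases Finset.mem_inter.1 hy with ⟨hyJ, hyJ₂⟩
  obtain ⟨K', hyK', hK'J, hK'K⟩ := hcov y hyJ
  have hnrK'J₂ : ¬ (GP P).Reachable K' J₂ := by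
    intro hr
    exact hnr (hK'K.symm.trans (hr.trans hadj.symm.reachable))
  rcases cases_of_not_reachable hnrK'J₂ with hd | h1 | h2
  · exact absurd (Finset.mem_inter.2 ⟨hyK', hyJ₂⟩) (by simp [hd])
  · -- K' ⊆ J₂ : propagate to get J ⊆ J₂
    have hJJ₂ : J.1 ⊆ J₂.1 := by
      intro w hw
      obtain ⟨K'', hwK'', _, hK''K⟩ := hcov w hw
      have hreach : (GP P).Reachable K' K'' := hK'K.trans hK''K.symm
      exact propagation h1 hnrK'J₂ hreach hwK''
    exact hadj.2.1 hJJ₂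
  · exact hadj.2.2 (h2.trans hK'J)

end Stmt1Aux

namespace Stmt1Aux

variable {n : ℕ} {P : PartialOrder (Fin n)} {M M1 M2 : Finset (ConnIdeal P)}

/-- Labels of non-isolated common members are stable. -/
lemma label_stable (hM1 : IsMaxIndep (GP P) M1) (hM2 : IsMaxIndep (GP P) M2)
    {J J₂ : ConnIdeal P} (hJ1 : J ∈ M1) (hJ2 : J ∈ M2)
    (hr : ∀ Z : ConnIdeal P, (GP P).Reachable Z J → (Z ∈ M1 ↔ Z ∈ M2))
    (hadj : (GP P).Adj J J₂)
    {x₁ x₂ : Fin n} (hx₁ : J.1 \ mu P M1 J.1 = {x₁})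
    (hx₂ : J.1 \ mu P M2 J.1 = {x₂}) : x₁ = x₂ := by
  by_contra hne
  have hx₂J := label_mem hx₂
  have hx₂mu1 : x₂ ∈ mu P M1 J.1 := by
    by_contra h
    have : x₂ ∈ J.1 \ mu P M1 J.1 := Finset.mem_sdiff.2 ⟨hx₂J.1, h⟩
    rw [hx₁, Finset.mem_singleton] at this
    exact hne this.symm
  obtain ⟨D, hDM, hDJ, hx₂D⟩ := mem_mu.1 hx₂mu1
  by_cases hreach : (GP P).Reachable D J
  · have hDM2 : D ∈ M2 := (hr D hreach).1 hDM
    exact hx₂J.2 (subset_mu hDM2 hDJ hx₂D)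
  · exact claimW hM2 hJ2 hx₂ hx₂D hDJ.1 hreach hadj

/-- Isolated members never produce descents. -/
lemma iso_no_descent (hnat : NatLabeled P) (hM : IsMaxIndep (GP P) M)
    {J p : ConnIdeal P} (hJ : J ∈ M) (hiso : ∀ K, ¬ (GP P).Adj J K)
    (hp : IsPar M J p) {x xp : Fin n} (hx : J.1 \ mu P M J.1 = {x})
    (hxp : p.1 \ mu P M p.1 = {xp}) : x < xp := by
  have hxJ := label_mem hx
  have hxpmem := label_mem hxp
  have hxpJ : xp ∉ J.1 := fun h => hxpmem.2 (subset_mu hJ hp.2.1 h)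
  obtain ⟨v, hv, u, hu, hlt⟩ := boundary (jconn_iff.1 p.2.2).2 hp.2.1.1 J.2.1
    (connIdeal_nonempty J) (fun h => (Finset.ssubset_iff_subset_ne.1 hp.2.1).2 h.symm)
    p.2.1
  rcases Finset.mem_sdiff.1 hu with ⟨hup, huJ⟩
  have huxp : u = xp := attach hM hJ hp hxp hup huJ hv (Or.inl (plt_le hlt))
  set Λ : ConnIdeal P := ⟨PIdeal P xp, connIdeal_pIdeal xp⟩ with hΛ
  rcases not_nontriv_cases (hiso Λ) with hd | h1 | h2
  · have : v ∈ J.1 ∩ Λ.1 :=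
      Finset.mem_inter.2 ⟨hv, mem_pIdeal.2 (huxp ▸ plt_le hlt)⟩
    simp [hd] at this
  · -- J ⊆ Λ
    have hxle : P.le x xp := mem_pIdeal.1 (h1 hxJ.1)
    have hxne : x ≠ xp := fun h => hxpJ (h ▸ hxJ.1)
    exact hnat x xp (plt_of_le_ne hxle hxne)
  · -- Λ ⊆ J : xp ∈ J, contradiction
    exact absurd (h2 (mem_pIdeal.2 (P.le_refl xp))) hxpJ

/-- Transfer of parents with equal labels, for non-isolated members. -/
lemma par_transfer (hM1 : IsMaxIndep (GP P) M1) (hM2 : IsMaxIndep (GP P) M2)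
    {J J₂ : ConnIdeal P} (hJ1 : J ∈ M1) (hJ2 : J ∈ M2)
    (hr : ∀ Z : ConnIdeal P, (GP P).Reachable Z J → (Z ∈ M1 ↔ Z ∈ M2))
    (hadj : (GP P).Adj J J₂) {p₁ : ConnIdeal P} (hp₁ : IsPar M1 J p₁) :
    ∃ p₂, IsPar M2 J p₂ ∧ ∀ y₁ y₂ : Fin n, p₁.1 \ mu P M1 p₁.1 = {y₁} →
      p₂.1 \ mu P M2 p₂.1 = {y₂} → y₁ = y₂ := by
  by_cases hrp : (GP P).Reachable p₁ J
  · -- parent in the same component: it is also the parent in M2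
    have hp₁M2 : p₁ ∈ M2 := (hr p₁ hrp).1 hp₁.1
    have hpar2 : IsPar M2 J p₁ := by
      refine ⟨hp₁M2, hp₁.2.1, fun Z hZ hZJ => ?_⟩
      by_cases hrZ : (GP P).Reachable Z J
      · exact hp₁.2.2 Z ((hr Z hrZ).2 hZ) hZJ
      · have hnrJZ : ¬ (GP P).Reachable J Z := fun h => hrZ h.symm
        exact propagation hZJ.1 hnrJZ hrp.symm
    refine ⟨p₁, hpar2, fun y₁ y₂ hy₁ hy₂ => ?_⟩
    -- p₁ is non-isolated (it is in the same component as J ≠ p₁)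
    have hnep : p₁ ≠ J := by
      intro h
      exact (Finset.ssubset_iff_subset_ne.1 hp₁.2.1).2 (congrArg Subtype.val h).symm
    obtain ⟨C, hC⟩ := exists_neighbor_of_reachable_ne hrp hnep
    have hr' : ∀ Z : ConnIdeal P, (GP P).Reachable Z p₁ → (Z ∈ M1 ↔ Z ∈ M2) :=
      fun Z hZ => hr Z (hZ.trans hrp)
    exact label_stable hM1 hM2 hp₁.1 hp₁M2 hr' hC hy₁ hy₂
  · -- parent in a different component
    obtain ⟨Z, hZM2, hZJ⟩ := exists_superset_of_adj hM2 hJ2 hadj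
    obtain ⟨p₂, hp₂⟩ := exists_isPar hM2 ⟨Z, hZM2, hZJ⟩
    have hnrJp₁ : ¬ (GP P).Reachable J p₁ := fun h => hrp h.symm
    have hrp₂ : ¬ (GP P).Reachable p₂ J := by
      intro hreach
      have hp₂M1 : p₂ ∈ M1 := (hr p₂ hreach).2 hp₂.1
      have hsub : p₁.1 ⊆ p₂.1 := hp₁.2.2 p₂ hp₂M1 hp₂.2.1
      have hsub' : p₂.1 ⊆ p₁.1 := propagation hp₁.2.1.1 hnrJp₁ hreach.symm
      exact hrp (Subtype.ext (Finset.Subset.antisymm hsub hsub') ▸ hreach)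
    refine ⟨p₂, hp₂, fun y₁ y₂ hy₁ hy₂ => ?_⟩
    have hnrJp₂ : ¬ (GP P).Reachable J p₂ := fun h => hrp₂ h.symm
    have hJ₂p₁ : J₂.1 ⊆ p₁.1 := propagation hp₁.2.1.1 hnrJp₁ hadj.reachable
    have hJ₂p₂ : J₂.1 ⊆ p₂.1 := propagation hp₂.2.1.1 hnrJp₂ hadj.reachable
    -- boundary of J inside J ∪ J₂
    set U : Finset (Fin n) := J.1 ∪ J₂.1 with hU
    have hidU : IsIdeal P U := isIdeal_union J.2.1 J₂.2.1
    obtain ⟨y, hy⟩ := hadj.1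
    rcases Finset.mem_inter.1 hy with ⟨hyJ, hyJ₂⟩
    have hrchU : ∀ a ∈ U, ∀ b ∈ U, rch P U a b := by
      have hy1 : ∀ a ∈ U, rch P U a y := by
        intro a ha
        rcases Finset.mem_union.1 ha with h | h
        · exact ((jconn_iff.1 J.2.2).2 a h y hyJ).mono Finset.subset_union_left
        · exact ((jconn_iff.1 J₂.2.2).2 a h y hyJ₂).mono Finset.subset_union_right
      exact fun a ha b hb => (hy1 a ha).trans (hy1 b hb).symm
    have hUJ : U ≠ J.1 := by
      intro h
      exact hadj.2.2 (fun z hz => h ▸ (Finset.mem_union_right _ hz))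
    obtain ⟨v, hv, u, hu, hlt⟩ := boundary hrchU Finset.subset_union_left J.2.1
      (connIdeal_nonempty J) hUJ hidU
    rcases Finset.mem_sdiff.1 hu with ⟨huU, huJ⟩
    have hup₁ : u ∈ p₁.1 := by
      rcases Finset.mem_union.1 huU with h | h
      · exact hp₁.2.1.1 h
      · exact hJ₂p₁ h
    have hup₂ : u ∈ p₂.1 := by
      rcases Finset.mem_union.1 huU with h | h
      · exact hp₂.2.1.1 h
      · exact hJ₂p₂ h
    have e₁ : u = y₁ := attach hM1 hJ1 hp₁ hy₁ hup₁ huJ hv (Or.inl (plt_le hlt))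
    have e₂ : u = y₂ := attach hM2 hJ2 hp₂ hy₂ hup₂ huJ hv (Or.inl (plt_le hlt))
    exact e₁.symm.trans e₂

end Stmt1Aux

namespace Stmt1Aux

variable {n : ℕ} {P : PartialOrder (Fin n)} {M : Finset (ConnIdeal P)}

lemma ltRel_iff (hM : IsMaxIndep (GP P) M) {a b : Fin n} :
    ltRel (FMle P M) a b ↔
      ∃ Ja ∈ M, ∃ Jb ∈ M, Ja.1 \ mu P M Ja.1 = {a} ∧ Jb.1 \ mu P M Jb.1 = {b} ∧
        Ja.1 ⊂ Jb.1 := by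
  constructor
  · rintro ⟨hle, hne⟩
    rcases hle with rfl | hlt
    · exact absurd rfl hne
    · obtain ⟨Ja, hJa, Jb, hJb, h1, h2, h3⟩ := hlt
      exact ⟨Ja, hJa, Jb, hJb, h1, h2, h3⟩
  · rintro ⟨Ja, hJa, Jb, hJb, h1, h2, h3⟩
    have hne : a ≠ b := by
      rintro rfl
      have : Ja = Jb := label_inj hM hJa hJb h1 h2
      rw [this] at h3
      exact (Finset.ssubset_iff_subset_ne.1 h3).2 rfl
    exact ⟨Or.inr ⟨Ja, hJa, Jb, hJb, h1, h2, h3⟩, hne⟩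

lemma covRel_iff (hM : IsMaxIndep (GP P) M) {i j : Fin n} :
    CovRel (FMle P M) i j ↔
      ∃ J p : ConnIdeal P, J ∈ M ∧ J.1 \ mu P M J.1 = {i} ∧ IsPar M J p ∧
        p.1 \ mu P M p.1 = {j} := by
  constructor
  · rintro ⟨hlt, hmin⟩
    obtain ⟨Ja, hJa, Jb, hJb, h1, h2, h3⟩ := (ltRel_iff hM).1 hlt
    obtain ⟨p, hp⟩ := exists_isPar hM ⟨Jb, hJb, h3⟩
    obtain ⟨y, hy, _⟩ := label_spec hM hp.1
    have hpJb : p.1 ⊆ Jb.1 := hp.2.2 Jb hJb h3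
    rcases eq_or_ne p.1 Jb.1 with heq | hne
    · refine ⟨Ja, p, hJa, h1, hp, ?_⟩
      have : p = Jb := Subtype.ext heq
      rw [this]
      exact h2
    · -- p strictly between: contradiction with CovRel minimality
      have hltiy : ltRel (FMle P M) i y :=
        (ltRel_iff hM).2 ⟨Ja, hJa, p, hp.1, h1, hy, hp.2.1⟩
      have hltyj : ltRel (FMle P M) y j :=
        (ltRel_iff hM).2 ⟨p, hp.1, Jb, hJb, hy, h2,
          Finset.ssubset_iff_subset_ne.2 ⟨hpJb, hne⟩⟩
      exact absurd hltyj (hmin y hltiy)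
  · rintro ⟨J, p, hJM, hJi, hpar, hpj⟩
    refine ⟨(ltRel_iff hM).2 ⟨J, hJM, p, hpar.1, hJi, hpj, hpar.2.1⟩, ?_⟩
    intro k hik hkj
    obtain ⟨J', hJ', Zk, hZk, hJ'i, hZkk, hJZk⟩ := (ltRel_iff hM).1 hik
    obtain ⟨Zk', hZk', Zj, hZj, hZk'k, hZjj, hZkZj⟩ := (ltRel_iff hM).1 hkj
    have e1 : J' = J := label_inj hM hJ' hJM hJ'i hJi
    have e2 : Zk' = Zk := label_inj hM hZk' hZk hZk'k hZkk
    have e3 : Zj = p := label_inj hM hZj hpar.1 hZjj hpj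
    rw [e1] at hJZk
    rw [e2, e3] at hZkZj
    have : p.1 ⊆ Zk.1 := hpar.2.2 Zk hZk hJZk
    exact (Finset.ssubset_iff_subset_ne.1 hZkZj).2
      (Finset.Subset.antisymm hZkZj.1 this)

lemma mem_desM_iff (hM : IsMaxIndep (GP P) M) {i : Fin n} :
    i ∈ DesM P M ↔
      ∃ J p : ConnIdeal P, ∃ j : Fin n, J ∈ M ∧ J.1 \ mu P M J.1 = {i} ∧
        IsPar M J p ∧ p.1 \ mu P M p.1 = {j} ∧ j < i := by
  simp only [DesM, DesRel, Finset.mem_filter, Finset.mem_univ, true_and]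
  constructor
  · rintro ⟨j, hcov, hji⟩
    obtain ⟨J, p, h1, h2, h3, h4⟩ := (covRel_iff hM).1 hcov
    exact ⟨J, p, j, h1, h2, h3, h4, hji⟩
  · rintro ⟨J, p, j, h1, h2, h3, h4, hji⟩
    exact ⟨j, (covRel_iff hM).2 ⟨J, p, h1, h2, h3, h4⟩, hji⟩

lemma mem_desMr_iff {Mr : Finset (ConnIdeal P)} (hM : IsMaxIndep (GP P) M)
    (hMrM : Mr ⊆ M) {i : Fin n} :
    i ∈ DesMr P Mr M ↔
      ∃ J p : ConnIdeal P, ∃ j : Fin n, J ∈ Mr ∧ J.1 \ mu P M J.1 = {i} ∧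
        IsPar M J p ∧ p.1 \ mu P M p.1 = {j} ∧ j < i := by
  simp only [DesMr, Finset.mem_filter]
  constructor
  · rintro ⟨hdes, J, hJMr, hJi⟩
    obtain ⟨J', p, j, h1, h2, h3, h4, h5⟩ := (mem_desM_iff hM).1 hdes
    have : J' = J := label_inj hM h1 (hMrM hJMr) h2 hJi
    rw [this] at h2 h3
    exact ⟨J, p, j, hJMr, h2, h3, h4, h5⟩
  · rintro ⟨J, p, j, h1, h2, h3, h4, h5⟩
    exact ⟨(mem_desM_iff hM).2 ⟨J, p, j, hMrM h1, h2, h3, h4, h5⟩, J, h1, h2⟩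

lemma mem_desBarMr_iff {Mr : Finset (ConnIdeal P)} (hM : IsMaxIndep (GP P) M)
    (hMrM : Mr ⊆ M) {J : ConnIdeal P} :
    J ∈ DesBarMr P Mr M ↔
      ∃ p : ConnIdeal P, ∃ i j : Fin n, J ∈ Mr ∧ J.1 \ mu P M J.1 = {i} ∧
        IsPar M J p ∧ p.1 \ mu P M p.1 = {j} ∧ j < i := by
  simp only [DesBarMr, Finset.mem_filter]
  constructor
  · rintro ⟨hJMr, i, hides, hJi⟩
    obtain ⟨J', p, j, h1, h2, h3, h4, h5⟩ := (mem_desMr_iff hM hMrM).1 hides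
    have : J' = J := label_inj hM (hMrM h1) (hMrM hJMr) h2 hJi
    rw [this] at h2 h3
    exact ⟨p, i, j, hJMr, h2, h3, h4, h5⟩
  · rintro ⟨p, i, j, h1, h2, h3, h4, h5⟩
    exact ⟨h1, i, (mem_desMr_iff hM hMrM).2 ⟨J, p, j, h1, h2, h3, h4, h5⟩, h2⟩

end Stmt1Aux

namespace Stmt1Aux

variable {n : ℕ} {P : PartialOrder (Fin n)}

/-- Core transfer: a descent witnessed in `M1` at `J ∈ Mr` transfers to `M2`. -/
lemma core_transfer (hnat : NatLabeled P) {c : (GP P).ConnectedComponent}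
    {Mr M1 M2 : Finset (ConnIdeal P)}
    (hM1 : IsMaxIndep (GP P) M1) (hM2 : IsMaxIndep (GP P) M2)
    (h1 : M1.filter (fun A => A ∈ c.supp) = Mr)
    (h2 : M2.filter (fun A => A ∈ c.supp) = Mr)
    {J p₁ : ConnIdeal P} {i j₁ : Fin n}
    (hJMr : J ∈ Mr) (hJi : J.1 \ mu P M1 J.1 = {i})
    (hp₁ : IsPar M1 J p₁) (hj₁ : p₁.1 \ mu P M1 p₁.1 = {j₁}) (hlt : j₁ < i) :
    ∃ p₂ : ConnIdeal P, (J.1 \ mu P M2 J.1 = {i}) ∧ IsPar M2 J p₂ ∧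
      ∃ j₂, p₂.1 \ mu P M2 p₂.1 = {j₂} ∧ j₂ < i := by
  have hJf1 : J ∈ M1.filter (fun A => A ∈ c.supp) := h1.symm ▸ hJMr
  rcases Finset.mem_filter.1 hJf1 with ⟨hJM1, hJsupp⟩
  have hJM2 : J ∈ M2 := (Finset.mem_filter.1 (h2.symm ▸ hJMr)).1
  have hr : ∀ Z : ConnIdeal P, (GP P).Reachable Z J → (Z ∈ M1 ↔ Z ∈ M2) := by
    intro Z hZr
    have hZsupp : Z ∈ c.supp := mem_supp_of_reachable hJsupp hZr.symm
    constructor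
    · intro h
      have : Z ∈ Mr := h1 ▸ Finset.mem_filter.2 ⟨h, hZsupp⟩
      exact (Finset.mem_filter.1 (h2.symm ▸ this)).1
    · intro h
      have : Z ∈ Mr := h2 ▸ Finset.mem_filter.2 ⟨h, hZsupp⟩
      exact (Finset.mem_filter.1 (h1.symm ▸ this)).1
  by_cases hiso : ∀ K, ¬ (GP P).Adj J K
  · exact absurd (iso_no_descent hnat hM1 hJM1 hiso hp₁ hJi hj₁)
      (by omega)
  · push_neg at hiso
    obtain ⟨J₂, hadj⟩ := hiso
    obtain ⟨i₂, hi₂, _⟩ := label_spec hM2 hJM2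
    have hii : i = i₂ := label_stable hM1 hM2 hJM1 hJM2 hr hadj hJi hi₂
    obtain ⟨p₂, hp₂, hlab⟩ := par_transfer hM1 hM2 hJM1 hJM2 hr hadj hp₁
    obtain ⟨j₂, hj₂, _⟩ := label_spec hM2 hp₂.1
    have hjj : j₁ = j₂ := hlab j₁ j₂ hj₁ hj₂
    exact ⟨p₂, hii ▸ hi₂, hp₂, j₂, hj₂, by omega⟩

end Stmt1Aux

open Stmt1Aux

/-- Theorem 1.2: for a naturally labeled poset `P`, a connected
component `c` of `G_P` and a maximum independent set `M_r` of `c`, the sets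
`Des(M_r, M)` and `Des̄(M_r, M)` do not depend on the choice of a maximum
independent set `M` of `G_P` with `M ∩ V(c) = M_r`. -/
theorem statement_1 (n : ℕ) (P : PartialOrder (Fin n)) (hnat : NatLabeled P)
    (c : (GP P).ConnectedComponent) (Mr : Finset (ConnIdeal P))
    (hMr : IsMaxIndepOn (GP P) c.supp Mr)
    (M1 M2 : Finset (ConnIdeal P))
    (hM1 : IsMaxIndep (GP P) M1) (hM2 : IsMaxIndep (GP P) M2)
    (h1 : M1.filter (fun A => A ∈ c.supp) = Mr)
    (h2 : M2.filter (fun A => A ∈ c.supp) = Mr) :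
    DesMr P Mr M1 = DesMr P Mr M2 ∧ DesBarMr P Mr M1 = DesBarMr P Mr M2 := by
  have hMr1 : Mr ⊆ M1 := by
    rw [← h1]; exact Finset.filter_subset _ _
  have hMr2 : Mr ⊆ M2 := by
    rw [← h2]; exact Finset.filter_subset _ _
  constructor
  · ext i
    rw [mem_desMr_iff hM1 hMr1, mem_desMr_iff hM2 hMr2]
    constructor
    · rintro ⟨J, p, j, hJ, hJi, hpar, hpj, hlt⟩
      obtain ⟨p₂, hi₂, hpar₂, j₂, hj₂, hlt₂⟩ :=
        core_transfer hnat hM1 hM2 h1 h2 hJ hJi hpar hpj hlt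
      exact ⟨J, p₂, j₂, hJ, hi₂, hpar₂, hj₂, hlt₂⟩
    · rintro ⟨J, p, j, hJ, hJi, hpar, hpj, hlt⟩
      obtain ⟨p₂, hi₂, hpar₂, j₂, hj₂, hlt₂⟩ :=
        core_transfer hnat hM2 hM1 h2 h1 hJ hJi hpar hpj hlt
      exact ⟨J, p₂, j₂, hJ, hi₂, hpar₂, hj₂, hlt₂⟩
  · ext J
    rw [mem_desBarMr_iff hM1 hMr1, mem_desBarMr_iff hM2 hMr2]
    constructor
    · rintro ⟨p, i, j, hJ, hJi, hpar, hpj, hlt⟩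
      obtain ⟨p₂, hi₂, hpar₂, j₂, hj₂, hlt₂⟩ :=
        core_transfer hnat hM1 hM2 h1 h2 hJ hJi hpar hpj hlt
      exact ⟨p₂, i, j₂, hJ, hi₂, hpar₂, hj₂, hlt₂⟩
    · rintro ⟨p, i, j, hJ, hJi, hpar, hpj, hlt⟩
      obtain ⟨p₂, hi₂, hpar₂, j₂, hj₂, hlt₂⟩ :=
        core_transfer hnat hM2 hM1 h2 h1 hJ hJi hpar hpj hlt
      exact ⟨p₂, i, j₂, hJ, hi₂, hpar₂, hj₂, hlt₂⟩
end
end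

section
/- For any finite poset P on {1,…,n}, every independent set of the graph G_P has at most n elements. -/
attribute [local instance] Classical.propDecidable

noncomputable section

open Finset

variable {n : ℕ}

/-- Any two distinct members of an independent set of `G_P` are nested or disjoint. -/
lemma indep_nested_s5 (P : PartialOrder (Fin n)) (s : Finset (ConnIdeal P))
    (hs : IsIndep (GP P) s) {J₁ J₂ : ConnIdeal P} (h1 : J₁ ∈ s) (h2 : J₂ ∈ s)
    (hx : (J₁.1 ∩ J₂.1).Nonempty) : J₁.1 ⊆ J₂.1 ∨ J₂.1 ⊆ J₁.1 := by
  have h := hs J₁ h1 J₂ h2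
  have h' : ¬ Nontriv J₁.1 J₂.1 := h
  unfold Nontriv at h'
  tauto

/-- Each member of an independent set has an element not covered by the proper
sub-members. -/
lemma indep_private (P : PartialOrder (Fin n)) (s : Finset (ConnIdeal P))
    (hs : IsIndep (GP P) s) (J : ConnIdeal P) (hJ : J ∈ s) :
    ∃ x ∈ J.1, ∀ J' ∈ s, J'.1 ⊂ J.1 → x ∉ J'.1 := by
  by_contra h
  push_neg at h
  -- J is nonempty since it is connected
  obtain ⟨⟨x0, hx0⟩⟩ := J.2.2.nonempty
  rw [Finset.mem_coe] at hx0
  -- the set of proper sub-members is nonempty; take a maximal one J₀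
  have hT : ((s.filter (fun J' => J'.1 ⊂ J.1)).image Subtype.val).Nonempty := by
    obtain ⟨J', hJ', hsub, hx⟩ := h x0 hx0
    exact ⟨J'.1, Finset.mem_image.2 ⟨J', Finset.mem_filter.2 ⟨hJ', hsub⟩, rfl⟩⟩
  obtain ⟨A, hA⟩ := Finset.exists_maximal hT
  have hAmem := hA.1
  have hAmax : ∀ x ∈ ((s.filter (fun J' => J'.1 ⊂ J.1)).image Subtype.val), ¬ A < x :=
    fun x hx hlt => lt_irrefl _ (lt_of_lt_of_le hlt (hA.2 hx hlt.le))
  obtain ⟨J₀, hJ₀f, rfl⟩ := Finset.mem_image.1 hAmem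
  obtain ⟨hJ₀s, hJ₀sub⟩ := Finset.mem_filter.1 hJ₀f
  -- no comparability between J₀ and its complement in J
  have cross : ∀ x ∈ J₀.1, ∀ y ∈ J.1, y ∉ J₀.1 → ¬ (P.le x y ∨ P.le y x) := by
    rintro x hx y hy hyn (hle | hle)
    · obtain ⟨J₁, hJ₁s, hJ₁sub, hyJ₁⟩ := h y hy
      have hxJ₁ : x ∈ J₁.1 := J₁.2.1 y hyJ₁ x hle
      rcases indep_nested_s5 P s hs hJ₁s hJ₀s ⟨x, Finset.mem_inter.2 ⟨hxJ₁, hx⟩⟩ with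
        hsub | hsub
      · exact hyn (hsub hyJ₁)
      · rcases eq_or_ne J₀.1 J₁.1 with heq | hne
        · exact hyn (heq ▸ hyJ₁)
        · exact hAmax J₁.1
            (Finset.mem_image.2 ⟨J₁, Finset.mem_filter.2 ⟨hJ₁s, hJ₁sub⟩, rfl⟩)
            (lt_of_le_of_ne hsub hne)
    · exact hyn (J₀.2.1 x hx y hle)
  -- walking in the induced graph on J stays inside J₀
  have walkA : ∀ (u v : (↑J.1 : Set (Fin n)))
      (w : ((compGraph P).induce (↑J.1 : Set (Fin n))).Walk u v),
      (u : Fin n) ∈ J₀.1 → (v : Fin n) ∈ J₀.1 := by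
    intro u v w
    induction w with
    | nil => exact id
    | @cons a b c hadj p ih =>
      intro hu
      apply ih
      have hbJ : (b : Fin n) ∈ J.1 := Finset.mem_coe.1 b.2
      by_contra hb
      rcases hadj.2 with hle | hle
      · exact cross a hu b hbJ hb (Or.inl hle)
      · exact hb (J₀.2.1 _ hu _ hle)
  -- J₀ is nonempty
  obtain ⟨⟨a0, ha0⟩⟩ := J₀.2.2.nonempty
  rw [Finset.mem_coe] at ha0
  -- an element of J outside J₀
  obtain ⟨y, hyJ, hyn⟩ := Finset.exists_of_ssubset hJ₀sub
  -- connectivity of J gives a walk from a0 to y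
  have hconn := J.2.2
  have hreach := hconn.preconnected ⟨a0, Finset.mem_coe.2 (hJ₀sub.1 ha0)⟩
    ⟨y, Finset.mem_coe.2 hyJ⟩
  obtain ⟨w⟩ := hreach
  exact hyn (walkA _ _ w ha0)

/-- from the proof of Lemma 2.2: every independent set of the
graph `G_P` has at most `n` elements. -/
theorem statement_5 (n : ℕ) (P : PartialOrder (Fin n))
    (s : Finset (ConnIdeal P)) (hs : IsIndep (GP P) s) :
    s.card ≤ n := by
  classical
  have key := indep_private P s hs
  choose c hc1 hc2 using key
  rcases s.eq_empty_or_nonempty with rfl | hne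
  · simp
  obtain ⟨J0, hJ0⟩ := hne
  have hinj : Set.InjOn (fun J => if h : J ∈ s then c J h else c J0 hJ0) ↑s := by
    intro J₁ h1 J₂ h2 heq
    rw [Finset.mem_coe] at h1 h2
    simp only [dif_pos h1, dif_pos h2] at heq
    by_contra hne
    have hne1 : J₁.1 ≠ J₂.1 := fun h => hne (Subtype.ext h)
    have hmem : (J₁.1 ∩ J₂.1).Nonempty :=
      ⟨c J₁ h1, Finset.mem_inter.2 ⟨hc1 J₁ h1, heq ▸ hc1 J₂ h2⟩⟩
    rcases indep_nested_s5 P s hs h1 h2 hmem with hsub | hsub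
    · exact hc2 J₂ h2 J₁ h1 (lt_of_le_of_ne hsub hne1) (heq ▸ hc1 J₁ h1)
    · exact hc2 J₁ h1 J₂ h2 (lt_of_le_of_ne hsub hne1.symm) (heq.symm ▸ hc1 J₂ h2)
  calc s.card ≤ (Finset.univ : Finset (Fin n)).card :=
        Finset.card_le_card_of_injOn _ (fun _ _ => Finset.mem_univ _) hinj
    _ = n := Finset.card_fin n
end
end

section
/- Given a maximum independent set M of G_P and J ∈ M, there exists a unique j such that J \ μ(M,J) = {j}; moreover this j is a maximal element of J with respect to the order ≤_P, and for any two distinct J_r, J_s ∈ M one has J_r \ μ(M,J_r) ≠ J_s \ μ(M,J_s). -/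
attribute [local instance] Classical.propDecidable

noncomputable section

open Finset

variable {n : ℕ}

section AuxStatement6

variable {P : PartialOrder (Fin n)}

lemma mem_mu' {M : Finset (ConnIdeal P)} {J : Finset (Fin n)} {x : Fin n} :
    x ∈ mu P M J ↔ ∃ K ∈ M, K.1 ⊂ J ∧ x ∈ K.1 := by
  simp only [mu, Finset.mem_biUnion, Finset.mem_filter]
  constructor
  · rintro ⟨K, ⟨hKM, hKJ⟩, hx⟩; exact ⟨K, hKM, hKJ, hx⟩
  · rintro ⟨K, hKM, hKJ, hx⟩; exact ⟨K, ⟨hKM, hKJ⟩, hx⟩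

lemma laminar {M : Finset (ConnIdeal P)} (hM : IsIndep (GP P) M)
    {A B : ConnIdeal P} (hA : A ∈ M) (hB : B ∈ M) :
    A.1 ∩ B.1 = ∅ ∨ A.1 ⊆ B.1 ∨ B.1 ⊆ A.1 := by
  by_contra h
  push_neg at h
  obtain ⟨h1, h2, h3⟩ := h
  exact hM A hA B hB ⟨h1, h2, h3⟩

lemma absorb {M : Finset (ConnIdeal P)} (hM : IsMaxIndep (GP P) M)
    (K : ConnIdeal P) (h : ∀ A ∈ M, ¬ Nontriv K.1 A.1) : K ∈ M := by
  by_contra hK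
  have indep : IsIndep (GP P) (insert K M) := by
    intro a ha b hb
    rcases Finset.mem_insert.1 ha with ha' | ha'
    · subst ha'
      rcases Finset.mem_insert.1 hb with hb' | hb'
      · subst hb'; exact (GP P).loopless.irrefl _
      · exact h b hb'
    · rcases Finset.mem_insert.1 hb with hb' | hb'
      · subst hb'; intro hadj; exact h a ha' ((GP P).adj_symm hadj)
      · exact hM.1 a ha' b hb'
  have hc := hM.2 _ indep
  rw [Finset.card_insert_of_notMem hK] at hc
  omega

lemma exists_min_rel (r : Fin n → Fin n → Prop)
    (htr : ∀ a b c, r a b → r b c → r a c) (hirr : ∀ x, ¬ r x x) :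
    ∀ S : Finset (Fin n), S.Nonempty → ∃ j ∈ S, ∀ k ∈ S, ¬ r k j := by
  intro S
  induction S using Finset.strongInduction with
  | _ S ih =>
    intro hS
    obtain ⟨x, hx⟩ := hS
    by_cases hT : (S.filter (fun y => r y x)).Nonempty
    · have hsub : S.filter (fun y => r y x) ⊂ S :=
        Finset.filter_ssubset.2 ⟨x, hx, hirr x⟩
      obtain ⟨j, hj, hmin⟩ := ih _ hsub hT
      obtain ⟨hjS, hjx⟩ := Finset.mem_filter.1 hj
      refine ⟨j, hjS, fun k hk hr => ?_⟩
      exact hmin k (Finset.mem_filter.2 ⟨hk, htr _ _ _ hr hjx⟩) hr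
    · exact ⟨x, hx, fun k hk hr => hT ⟨k, Finset.mem_filter.2 ⟨hk, hr⟩⟩⟩

lemma walk_closed {V : Type*} {G : SimpleGraph V} {Q : V → Prop}
    (hQ : ∀ a b, Q a → G.Adj a b → Q b) :
    ∀ {a b : V}, G.Walk a b → Q a → Q b := by
  intro a b w
  induction w with
  | nil => exact id
  | cons h p ih => exact fun ha => ih (hQ _ _ ha h)

lemma reachable_mono {G : SimpleGraph (Fin n)} {s t : Set (Fin n)} (h : s ⊆ t)
    {a b : Fin n} (ha : a ∈ s) (hb : b ∈ s)
    (hr : (G.induce s).Reachable ⟨a, ha⟩ ⟨b, hb⟩) :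
    (G.induce t).Reachable ⟨a, h ha⟩ ⟨b, h hb⟩ :=
  hr.map ⟨Set.inclusion h, fun {_ _} hxy => hxy⟩

end AuxStatement6

section IJSection

variable {P : PartialOrder (Fin n)}

lemma IJ_spec {M : Finset (ConnIdeal P)} (hM : IsMaxIndep (GP P) M)
    (J : ConnIdeal P) (hJ : J ∈ M) (j : Fin n) (hj : j ∈ J.1) :
    ∃ K : ConnIdeal P, K ∈ M ∧
      K.1 = PIdeal P j ∪
        (M.filter (fun K' => K'.1 ⊂ J.1 ∧ (K'.1 ∩ PIdeal P j).Nonempty)).biUnion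
          (fun K' => K'.1) ∧
      K.1 ⊆ J.1 ∧ j ∈ K.1 := by
  set F := M.filter (fun K' => K'.1 ⊂ J.1 ∧ (K'.1 ∩ PIdeal P j).Nonempty) with hF
  set I := PIdeal P j ∪ F.biUnion (fun K' => K'.1) with hI
  have hPmem : ∀ x, x ∈ PIdeal P j ↔ P.le x j := by
    intro x; simp [PIdeal]
  have hjP : j ∈ PIdeal P j := (hPmem j).2 (P.le_refl j)
  have hjI : j ∈ I := Finset.mem_union_left _ hjP
  have hIJ : I ⊆ J.1 := by
    intro x hx
    rcases Finset.mem_union.1 hx with hx | hx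
    · exact J.2.1 j hj x ((hPmem x).1 hx)
    · obtain ⟨K', hK', hxK⟩ := Finset.mem_biUnion.1 hx
      exact ((Finset.mem_filter.1 hK').2.1).subset hxK
  have hIdeal : IsIdeal P I := by
    intro x hx y hy
    rcases Finset.mem_union.1 hx with hx | hx
    · exact Finset.mem_union_left _ ((hPmem y).2 (P.le_trans _ _ _ hy ((hPmem x).1 hx)))
    · obtain ⟨K', hK', hxK⟩ := Finset.mem_biUnion.1 hx
      exact Finset.mem_union_right _
        (Finset.mem_biUnion.2 ⟨K', hK', K'.2.1 x hxK y hy⟩)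
  -- reachability to j in the induced graph on I
  have hjI' : (j : Fin n) ∈ (↑I : Set (Fin n)) := Finset.mem_coe.2 hjI
  have hreachP : ∀ x (hx : x ∈ (↑I : Set (Fin n))), x ∈ PIdeal P j →
      ((compGraph P).induce (↑I : Set (Fin n))).Reachable ⟨x, hx⟩ ⟨j, hjI'⟩ := by
    intro x hx hxP
    by_cases hxj : x = j
    · subst hxj; exact SimpleGraph.Reachable.refl _
    · exact SimpleGraph.Adj.reachable (⟨hxj, Or.inl ((hPmem x).1 hxP)⟩ :
        (compGraph P).Adj x j)
  have hreach : ∀ x (hx : x ∈ (↑I : Set (Fin n))),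
      ((compGraph P).induce (↑I : Set (Fin n))).Reachable ⟨x, hx⟩ ⟨j, hjI'⟩ := by
    intro x hx
    rcases Finset.mem_union.1 (Finset.mem_coe.1 hx) with hxP | hxB
    · exact hreachP x hx hxP
    · obtain ⟨K', hK'F, hxK⟩ := Finset.mem_biUnion.1 hxB
      obtain ⟨hK'M, hK'J, hK'ne⟩ := Finset.mem_filter.1 hK'F
      obtain ⟨x', hx'⟩ := hK'ne
      have hx'K : x' ∈ K'.1 := (Finset.mem_inter.1 hx').1
      have hx'P : x' ∈ PIdeal P j := (Finset.mem_inter.1 hx').2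
      have hKsub : (↑K'.1 : Set (Fin n)) ⊆ (↑I : Set (Fin n)) := by
        intro y hy
        exact Finset.mem_coe.2 (Finset.mem_union_right _
          (Finset.mem_biUnion.2 ⟨K', hK'F, Finset.mem_coe.1 hy⟩))
      have hr1 : ((compGraph P).induce (↑K'.1 : Set (Fin n))).Reachable
          ⟨x, Finset.mem_coe.2 hxK⟩ ⟨x', Finset.mem_coe.2 hx'K⟩ :=
        K'.2.2.preconnected _ _
      have hr2 := reachable_mono hKsub _ _ hr1
      exact SimpleGraph.Reachable.trans hr2
        (hreachP x' (hKsub (Finset.mem_coe.2 hx'K)) hx'P)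
  have hConn : JConn P I := by
    rw [JConn, SimpleGraph.connected_iff]
    refine ⟨?_, ⟨⟨j, hjI'⟩⟩⟩
    intro a b
    obtain ⟨a, ha⟩ := a
    obtain ⟨b, hb⟩ := b
    exact (hreach a ha).trans (hreach b hb).symm
  -- non-adjacency with every member of M
  have hnontriv : ∀ A ∈ M, ¬ Nontriv I A.1 := by
    intro A hA hN
    obtain ⟨hne, hIA, hAI⟩ := hN
    rcases laminar hM.1 hJ hA with hdisj | hsub | hsup
    · obtain ⟨x, hx⟩ := hne
      obtain ⟨hxI, hxA⟩ := Finset.mem_inter.1 hx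
      have hxJ : x ∈ J.1 ∩ A.1 := Finset.mem_inter.2 ⟨hIJ hxI, hxA⟩
      rw [hdisj] at hxJ
      exact Finset.notMem_empty x hxJ
    · exact hIA (hIJ.trans hsub)
    · by_cases hAJ : A.1 = J.1
      · exact hIA (hAJ ▸ hIJ)
      · have hAss : A.1 ⊂ J.1 := Finset.ssubset_iff_subset_ne.2 ⟨hsup, hAJ⟩
        by_cases hAP : (A.1 ∩ PIdeal P j).Nonempty
        · have hAF : A ∈ F := Finset.mem_filter.2 ⟨hA, hAss, hAP⟩
          exact hAI ((Finset.subset_biUnion_of_mem (fun K' => K'.1) hAF).trans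
            Finset.subset_union_right)
        · by_cases hEx : ∃ K' ∈ F, A.1 ⊆ K'.1
          · obtain ⟨K', hK'F, hAK'⟩ := hEx
            exact hAI (hAK'.trans ((Finset.subset_biUnion_of_mem (fun K' => K'.1) hK'F).trans
              Finset.subset_union_right))
          · obtain ⟨x, hx⟩ := hne
            obtain ⟨hxI, hxA⟩ := Finset.mem_inter.1 hx
            rcases Finset.mem_union.1 hxI with hxP | hxB
            · exact hAP ⟨x, Finset.mem_inter.2 ⟨hxA, hxP⟩⟩
            · obtain ⟨K', hK'F, hxK⟩ := Finset.mem_biUnion.1 hxB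
              obtain ⟨hK'M, hK'J, hK'ne⟩ := Finset.mem_filter.1 hK'F
              rcases laminar hM.1 hA hK'M with hd | hs | hs
              · have : x ∈ A.1 ∩ K'.1 := Finset.mem_inter.2 ⟨hxA, hxK⟩
                rw [hd] at this
                exact Finset.notMem_empty x this
              · exact hEx ⟨K', hK'F, hs⟩
              · obtain ⟨y, hy⟩ := hK'ne
                obtain ⟨hyK, hyP⟩ := Finset.mem_inter.1 hy
                exact hAP ⟨y, Finset.mem_inter.2 ⟨hs hyK, hyP⟩⟩
  have hKmem : (⟨I, hIdeal, hConn⟩ : ConnIdeal P) ∈ M := absorb hM _ hnontriv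
  exact ⟨⟨I, hIdeal, hConn⟩, hKmem, rfl, hIJ, hjI⟩

end IJSection

section KeySection

variable {P : PartialOrder (Fin n)}

lemma key_singleton {M : Finset (ConnIdeal P)} (hM : IsMaxIndep (GP P) M) :
    ∀ J ∈ M, ∃ j : Fin n, J.1 \ mu P M J.1 = {j} := by
  intro J hJ
  set S := J.1 \ mu P M J.1 with hSdef
  -- Step 1 : S is nonempty
  have hSne : S.Nonempty := by
    by_contra hSe
    rw [Finset.not_nonempty_iff_eq_empty] at hSe
    have hJmu : ∀ x ∈ J.1, x ∈ mu P M J.1 := by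
      intro x hx
      by_contra hxm
      have hxS : x ∈ S := Finset.mem_sdiff.2 ⟨hx, hxm⟩
      rw [hSe] at hxS
      exact Finset.notMem_empty x hxS
    obtain ⟨⟨x₀, hx₀⟩⟩ := J.2.2.nonempty
    have hx₀J : x₀ ∈ J.1 := Finset.mem_coe.1 hx₀
    obtain ⟨K₀, hK₀M, hK₀J, _⟩ := mem_mu'.1 (hJmu x₀ hx₀J)
    set U := M.filter (fun K => K.1 ⊂ J.1) with hU
    have hUne : U.Nonempty := ⟨K₀, Finset.mem_filter.2 ⟨hK₀M, hK₀J⟩⟩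
    obtain ⟨Km, hKmU, hKmmax⟩ := Finset.exists_max_image U (fun K => K.1.card) hUne
    obtain ⟨hKmM, hKmJ⟩ := Finset.mem_filter.1 hKmU
    have hclosed : ∀ a b : Fin n, a ∈ Km.1 → b ∈ J.1 → (compGraph P).Adj a b → b ∈ Km.1 := by
      intro a b ha hb hadj
      obtain ⟨hne, hcmp⟩ := hadj
      rcases hcmp with hab | hba
      · obtain ⟨K', hK'M, hK'J, hbK'⟩ := mem_mu'.1 (hJmu b hb)
        have haK' : a ∈ K'.1 := K'.2.1 b hbK' a hab
        rcases laminar hM.1 hKmM hK'M with hd | hs | hs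
        · have : a ∈ Km.1 ∩ K'.1 := Finset.mem_inter.2 ⟨ha, haK'⟩
          rw [hd] at this
          exact absurd this (Finset.notMem_empty a)
        · have hcard : K'.1.card ≤ Km.1.card :=
            hKmmax K' (Finset.mem_filter.2 ⟨hK'M, hK'J⟩)
          have heq : Km.1 = K'.1 := Finset.eq_of_subset_of_card_le hs hcard
          rw [heq]; exact hbK'
        · exact hs hbK'
      · exact Km.2.1 a ha b hba
    obtain ⟨y, hyJ, hyK⟩ := Finset.exists_of_ssubset hKmJ
    obtain ⟨⟨xK, hxK⟩⟩ := Km.2.2.nonempty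
    have hxKm : xK ∈ Km.1 := Finset.mem_coe.1 hxK
    have hxJ : xK ∈ J.1 := hKmJ.subset hxKm
    obtain ⟨w⟩ := J.2.2.preconnected ⟨xK, Finset.mem_coe.2 hxJ⟩ ⟨y, Finset.mem_coe.2 hyJ⟩
    have hyKm : y ∈ Km.1 := by
      refine walk_closed (G := (compGraph P).induce (↑J.1 : Set (Fin n)))
        (Q := fun v => (v : Fin n) ∈ Km.1) ?_ w hxKm
      intro a b ha hadj
      exact hclosed a b ha (Finset.mem_coe.1 b.2) hadj
    exact hyK hyKm
  -- Step 2 : S is a singleton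
  have htr : ∀ a b c : Fin n, P.lt a b → P.lt b c → P.lt a c := by
    intro a b c hab hbc
    obtain ⟨h1, h2⟩ := (P.lt_iff_le_not_ge a b).1 hab
    obtain ⟨h3, h4⟩ := (P.lt_iff_le_not_ge b c).1 hbc
    exact (P.lt_iff_le_not_ge a c).2
      ⟨P.le_trans _ _ _ h1 h3, fun h => h4 (P.le_trans _ _ _ h h1)⟩
  have hirr : ∀ x : Fin n, ¬ P.lt x x := by
    intro x hx
    obtain ⟨h1, h2⟩ := (P.lt_iff_le_not_ge x x).1 hx
    exact h2 h1
  obtain ⟨j, hjS, hjmin⟩ := exists_min_rel P.lt htr hirr S hSne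
  obtain ⟨hjJ, hjmu⟩ := Finset.mem_sdiff.1 hjS
  refine ⟨j, Finset.eq_singleton_iff_unique_mem.2 ⟨hjS, ?_⟩⟩
  intro k hkS
  by_contra hkj
  obtain ⟨hkJ, hkmu⟩ := Finset.mem_sdiff.1 hkS
  obtain ⟨KI, hKIM, hKIeq, hKIJ, hjKI⟩ := IJ_spec hM J hJ j hjJ
  have hkKI : k ∉ KI.1 := by
    rw [hKIeq]
    intro hk
    rcases Finset.mem_union.1 hk with hk | hk
    · have hlekj : P.le k j := by simpa [PIdeal] using hk
      have hltkj : P.lt k j := (P.lt_iff_le_not_ge k j).2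
        ⟨hlekj, fun h => hkj (P.le_antisymm _ _ hlekj h)⟩
      exact hjmin k hkS hltkj
    · obtain ⟨K', hK'F, hkK'⟩ := Finset.mem_biUnion.1 hk
      obtain ⟨hK'M, hK'J, _⟩ := Finset.mem_filter.1 hK'F
      exact hkmu (mem_mu'.2 ⟨K', hK'M, hK'J, hkK'⟩)
  have hKIss : KI.1 ⊂ J.1 :=
    Finset.ssubset_iff_subset_ne.2 ⟨hKIJ, fun he => hkKI (he ▸ hkJ)⟩
  exact hjmu (mem_mu'.2 ⟨KI, hKIM, hKIss, hjKI⟩)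

end KeySection

/-- Lemma 2.3: for a maximum independent set `M` of `G_P` and
`J ∈ M`, there is a unique `j` with `J \ μ(M,J) = {j}`; this `j` is a maximal
element of `J` with respect to `≤_P`, and distinct members of `M` have distinct
sets `J \ μ(M,J)`. -/
theorem statement_6 (n : ℕ) (P : PartialOrder (Fin n))
    (M : Finset (ConnIdeal P)) (hM : IsMaxIndep (GP P) M)
    (J : ConnIdeal P) (hJ : J ∈ M) :
    (∃! j : Fin n, J.1 \ mu P M J.1 = {j}) ∧
    (∀ j : Fin n, J.1 \ mu P M J.1 = {j} → j ∈ J.1 ∧ ∀ k ∈ J.1, ¬ P.lt j k) ∧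
    (∀ Jr ∈ M, ∀ Js ∈ M, Jr ≠ Js →
      Jr.1 \ mu P M Jr.1 ≠ Js.1 \ mu P M Js.1) := by
  have key := key_singleton hM
  obtain ⟨j, hj⟩ := key J hJ
  refine ⟨⟨j, hj, fun j' hj' => Finset.singleton_injective (hj'.symm.trans hj)⟩, ?_, ?_⟩
  · intro j' hj'
    have hjmem : j' ∈ J.1 \ mu P M J.1 := by
      rw [hj']; exact Finset.mem_singleton_self j'
    obtain ⟨hjJ, hjmu⟩ := Finset.mem_sdiff.1 hjmem
    refine ⟨hjJ, fun k hk hlt => ?_⟩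
    have hkj : k ≠ j' := by
      rintro rfl
      obtain ⟨h1, h2⟩ := (P.lt_iff_le_not_ge _ _).1 hlt
      exact h2 h1
    have hkmu : k ∈ mu P M J.1 := by
      by_contra hk'
      have hmem : k ∈ J.1 \ mu P M J.1 := Finset.mem_sdiff.2 ⟨hk, hk'⟩
      rw [hj'] at hmem
      exact hkj (Finset.mem_singleton.1 hmem)
    obtain ⟨K, hKM, hKJ, hkK⟩ := mem_mu'.1 hkmu
    have hjK : j' ∈ K.1 := K.2.1 k hkK j' ((P.lt_iff_le_not_ge _ _).1 hlt).1
    exact hjmu (mem_mu'.2 ⟨K, hKM, hKJ, hjK⟩)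
  · intro Jr hJr Js hJs hne heq
    obtain ⟨jr, hjr⟩ := key Jr hJr
    have hjs : Js.1 \ mu P M Js.1 = {jr} := by rw [← heq]; exact hjr
    have hjrr : jr ∈ Jr.1 ∧ jr ∉ mu P M Jr.1 := by
      have : jr ∈ Jr.1 \ mu P M Jr.1 := by
        rw [hjr]; exact Finset.mem_singleton_self jr
      exact Finset.mem_sdiff.1 this
    have hjrs : jr ∈ Js.1 ∧ jr ∉ mu P M Js.1 := by
      have : jr ∈ Js.1 \ mu P M Js.1 := by
        rw [hjs]; exact Finset.mem_singleton_self jr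
      exact Finset.mem_sdiff.1 this
    have hne1 : Jr.1 ≠ Js.1 := fun h => hne (Subtype.ext h)
    rcases laminar hM.1 hJr hJs with hd | hs | hs
    · have hmem : jr ∈ Jr.1 ∩ Js.1 := Finset.mem_inter.2 ⟨hjrr.1, hjrs.1⟩
      rw [hd] at hmem
      exact Finset.notMem_empty _ hmem
    · exact hjrs.2 (mem_mu'.2 ⟨Jr, hJr, Finset.ssubset_iff_subset_ne.2 ⟨hs, hne1⟩, hjrr.1⟩)
    · exact hjrr.2 (mem_mu'.2 ⟨Js, hJs, Finset.ssubset_iff_subset_ne.2 ⟨hs, hne1.symm⟩, hjrs.1⟩)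
end
end

section
/- Given a maximum independent set M of G_P, let F_M be the associated partial order on {1,…,n}. Then for every j ∈ {1,…,n}, the principal order ideal Λ_j^{F_M} = {i : i ≤_{F_M} j} equals J, where J is the unique element of M satisfying J \ μ(M,J) = {j}. -/
attribute [local instance] Classical.propDecidable

noncomputable section

open Finset

variable {n : ℕ}

/-! ### Auxiliary lemmas for statement 7 -/

lemma aux_laminar {P : PartialOrder (Fin n)} {M : Finset (ConnIdeal P)}
    (hM : IsIndep (GP P) M) {A B : ConnIdeal P} (hA : A ∈ M) (hB : B ∈ M)
    (hx : (A.1 ∩ B.1).Nonempty) : A.1 ⊆ B.1 ∨ B.1 ⊆ A.1 := by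
  by_contra h
  push_neg at h
  exact hM A hA B hB ⟨hx, h.1, h.2⟩

lemma aux_mem_mu {P : PartialOrder (Fin n)} {M : Finset (ConnIdeal P)}
    {J : Finset (Fin n)} {i : Fin n} :
    i ∈ mu P M J ↔ ∃ B ∈ M, B.1 ⊂ J ∧ i ∈ B.1 := by
  simp only [mu, Finset.mem_biUnion, Finset.mem_filter]
  tauto

lemma aux_sparse_disjoint {P : PartialOrder (Fin n)} {M : Finset (ConnIdeal P)}
    (hM : IsIndep (GP P) M) {A B : ConnIdeal P} (hA : A ∈ M) (hB : B ∈ M)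
    (hne : A ≠ B) :
    Disjoint (A.1 \ mu P M A.1) (B.1 \ mu P M B.1) := by
  rw [Finset.disjoint_left]
  intro x hxA hxB
  rw [Finset.mem_sdiff] at hxA hxB
  have hne' : A.1 ≠ B.1 := fun h => hne (Subtype.ext h)
  rcases aux_laminar hM hA hB ⟨x, Finset.mem_inter.2 ⟨hxA.1, hxB.1⟩⟩ with hs | hs
  · exact hxB.2 (aux_mem_mu.2 ⟨A, hA, ⟨hs, fun hc => hne' (Finset.Subset.antisymm hs hc)⟩, hxA.1⟩)
  · exact hxA.2 (aux_mem_mu.2 ⟨B, hB, ⟨hs, fun hc => hne' (Finset.Subset.antisymm hc hs)⟩, hxB.1⟩)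

lemma aux_reach_closed {V : Type*} {G : SimpleGraph V} {T : Set V}
    (hT : ∀ u v, u ∈ T → G.Adj u v → v ∈ T) {a b : V}
    (h : G.Reachable a b) : a ∈ T → b ∈ T := by
  obtain ⟨p⟩ := h
  induction p with
  | nil => exact id
  | cons h' _ ih => exact fun ha => ih (hT _ _ ha h')

lemma aux_reach_induce {V : Type*} {G H : SimpleGraph V} {S : Set V}
    (hHG : ∀ a b, H.Adj a b → G.Adj a b)
    (hHS : ∀ a b, H.Adj a b → a ∈ S ∧ b ∈ S)
    {a b : V} (h : H.Reachable a b) :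
    ∀ (ha : a ∈ S) (hb : b ∈ S), (G.induce S).Reachable ⟨a, ha⟩ ⟨b, hb⟩ := by
  obtain ⟨p⟩ := h
  induction p with
  | nil => intro ha hb; exact SimpleGraph.Reachable.refl _
  | @cons a w b h' q ih =>
    intro ha hb
    have hw := (hHS _ _ h').2
    exact (SimpleGraph.Adj.reachable
      (show (G.induce S).Adj ⟨a, ha⟩ ⟨w, hw⟩ from hHG _ _ h')).trans (ih hw hb)

lemma aux_sparse_nonempty {P : PartialOrder (Fin n)} {M : Finset (ConnIdeal P)}
    (hM : IsIndep (GP P) M) {A : ConnIdeal P} (hA : A ∈ M) :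
    (A.1 \ mu P M A.1).Nonempty := by
  by_contra hne
  rw [Finset.not_nonempty_iff_eq_empty, Finset.sdiff_eq_empty_iff_subset] at hne
  -- every element of A lies in a proper M-subideal of A
  have hTne : (M.filter (fun B => B.1 ⊂ A.1)).Nonempty := by
    obtain ⟨⟨v, hv⟩⟩ := A.2.2.nonempty
    obtain ⟨B, hB, hBs, _⟩ := aux_mem_mu.1 (hne (Finset.mem_coe.1 hv))
    exact ⟨B, Finset.mem_filter.2 ⟨hB, hBs⟩⟩
  obtain ⟨B0, hB0T, hB0max⟩ :=
    (M.filter (fun B => B.1 ⊂ A.1)).exists_max_image (fun B => B.1.card) hTne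
  obtain ⟨hB0M, hB0s⟩ := Finset.mem_filter.1 hB0T
  -- no compGraph edge between B0 and A \ B0
  have key : ∀ a ∈ B0.1, ∀ b ∈ A.1, b ∉ B0.1 → ¬ (compGraph P).Adj a b := by
    intro a ha b hb hbn hadj
    obtain ⟨hne', hcomp⟩ := hadj
    rcases hcomp with h1 | h2
    · obtain ⟨B2, hB2M, hB2s, hbB2⟩ := aux_mem_mu.1 (hne hb)
      have haB2 : a ∈ B2.1 := B2.2.1 b hbB2 a h1
      rcases aux_laminar hM hB0M hB2M ⟨a, Finset.mem_inter.2 ⟨ha, haB2⟩⟩ with hs | hs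
      · have hss : B0.1 ⊂ B2.1 := ⟨hs, fun hc => hbn (hc hbB2)⟩
        exact absurd (Finset.card_lt_card hss)
          (not_lt.2 (hB0max B2 (Finset.mem_filter.2 ⟨hB2M, hB2s⟩)))
      · exact hbn (hs hbB2)
    · exact hbn (B0.2.1 a ha b h2)
  -- B0 is nonempty, A \ B0 is nonempty
  obtain ⟨⟨a, haB0'⟩⟩ := B0.2.2.nonempty
  have haB0 : a ∈ B0.1 := Finset.mem_coe.1 haB0'
  obtain ⟨b, hbA, hbB0⟩ := Finset.exists_of_ssubset hB0s
  have haA : a ∈ A.1 := hB0s.1 haB0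
  have hreach := A.2.2.preconnected ⟨a, Finset.mem_coe.2 haA⟩ ⟨b, Finset.mem_coe.2 hbA⟩
  have : b ∈ B0.1 := by
    refine aux_reach_closed (T := {v : (↑A.1 : Set (Fin n)) | v.1 ∈ B0.1})
      ?_ hreach haB0
    intro u v hu hadj
    by_contra hv
    exact key u.1 hu v.1 (Finset.mem_coe.1 v.2) hv hadj
  exact hbB0 this

lemma aux_exists_indep_card (P : PartialOrder (Fin n)) :
    ∃ T : Finset (ConnIdeal P), IsIndep (GP P) T ∧ T.card = n := by
  have hpo : IsPartialOrder (Fin n) P.le :=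
    { refl := P.le_refl
      trans := P.le_trans
      antisymm := P.le_antisymm }
  obtain ⟨s, hlin, hrs⟩ := @extend_partialOrder (Fin n) P.le hpo
  haveI := hlin
  -- the graph on vertices "≤ i in the linear order"
  let Gi : Fin n → SimpleGraph (Fin n) := fun i =>
    { Adj := fun a b => (compGraph P).Adj a b ∧ s a i ∧ s b i
      symm := ⟨fun a b h => ⟨h.1.symm, h.2.2, h.2.1⟩⟩
      loopless := ⟨fun a h => h.1.1 rfl⟩ }
  -- C i : connected component of i among elements ≤ i
  let C : Fin n → Finset (Fin n) :=
    fun i => Finset.univ.filter (fun k => s k i ∧ (Gi i).Reachable k i)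
  have hmemC : ∀ i k, k ∈ C i ↔ s k i ∧ (Gi i).Reachable k i := by
    intro i k; simp [C]
  have hiC : ∀ i, i ∈ C i := fun i =>
    (hmemC i i).2 ⟨refl_of s i, SimpleGraph.Reachable.refl i⟩
  have hIdeal : ∀ i, IsIdeal P (C i) := by
    intro i k hk m hm
    obtain ⟨hski, hreach⟩ := (hmemC i k).1 hk
    by_cases hmk : m = k
    · exact hmk ▸ hk
    · have hsmk : s m k := hrs m k hm
      have hsmi : s m i := _root_.trans_of s hsmk hski
      have hadj : (Gi i).Adj m k := ⟨⟨hmk, Or.inl hm⟩, hsmi, hski⟩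
      exact (hmemC i m).2 ⟨hsmi, hadj.reachable.trans hreach⟩
  have hconn : ∀ i, JConn P (C i) := by
    intro i
    -- an auxiliary graph whose edges live inside C i
    let H : SimpleGraph (Fin n) :=
      { Adj := fun a b => (compGraph P).Adj a b ∧ a ∈ C i ∧ b ∈ C i
        symm := ⟨fun a b h => ⟨h.1.symm, h.2.2, h.2.1⟩⟩
        loopless := ⟨fun a h => h.1.1 rfl⟩ }
    have claim : ∀ a b (p : (Gi i).Walk a b), b ∈ C i → a ∈ C i ∧ H.Reachable a b := by
      intro a b p
      induction p with
      | nil => exact fun hb => ⟨hb, SimpleGraph.Reachable.refl _⟩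
      | @cons a w b h q ih =>
        intro hb
        obtain ⟨hwC, hr⟩ := ih hb
        have haC : a ∈ C i := (hmemC i a).2
          ⟨h.2.1, h.reachable.trans ((hmemC i w).1 hwC).2⟩
        exact ⟨haC, (SimpleGraph.Adj.reachable (show H.Adj a w from ⟨h.1, haC, hwC⟩)).trans hr⟩
    have hHreach : ∀ a ∈ C i, H.Reachable a i := by
      intro a ha
      obtain ⟨p⟩ := ((hmemC i a).1 ha).2
      exact (claim a i p (hiC i)).2
    haveI hne : Nonempty (↑(↑(C i) : Set (Fin n))) := ⟨⟨i, Finset.mem_coe.2 (hiC i)⟩⟩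
    refine SimpleGraph.Connected.mk ?_
    rintro ⟨u, hu⟩ ⟨v, hv⟩
    have h1 := aux_reach_induce (G := compGraph P) (H := H) (S := (↑(C i) : Set (Fin n)))
      (fun a b h => h.1) (fun a b h => ⟨Finset.mem_coe.2 h.2.1, Finset.mem_coe.2 h.2.2⟩)
      (hHreach u (Finset.mem_coe.1 hu)) hu (Finset.mem_coe.2 (hiC i))
    have h2 := aux_reach_induce (G := compGraph P) (H := H) (S := (↑(C i) : Set (Fin n)))
      (fun a b h => h.1) (fun a b h => ⟨Finset.mem_coe.2 h.2.1, Finset.mem_coe.2 h.2.2⟩)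
      (hHreach v (Finset.mem_coe.1 hv)) hv (Finset.mem_coe.2 (hiC i))
    exact h1.trans h2.symm
  have hnest : ∀ i k, s i k → ((C i) ∩ (C k)).Nonempty → C i ⊆ C k := by
    intro i k hik hx y hy
    obtain ⟨x, hx⟩ := hx
    rw [Finset.mem_inter] at hx
    have hle : Gi i ≤ Gi k := by
      intro a b hab
      exact ⟨hab.1, _root_.trans_of s hab.2.1 hik, _root_.trans_of s hab.2.2 hik⟩
    obtain ⟨hsyi, hry⟩ := (hmemC i y).1 hy
    obtain ⟨hsxi, hrx⟩ := (hmemC i x).1 hx.1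
    obtain ⟨hsxk, hrxk⟩ := (hmemC k x).1 hx.2
    refine (hmemC k y).2 ⟨_root_.trans_of s hsyi hik, ?_⟩
    exact ((hry.mono hle).trans (hrx.mono hle).symm).trans hrxk
  have hCinj : Function.Injective C := by
    intro i k h
    have h1 : s i k := ((hmemC k i).1 (h ▸ hiC i)).1
    have h2 : s k i := ((hmemC i k).1 (h ▸ hiC k)).1
    exact antisymm_of s h1 h2
  refine ⟨Finset.univ.image (fun i => (⟨C i, hIdeal i, hconn i⟩ : ConnIdeal P)), ?_, ?_⟩
  · intro A hA B hB hadj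
    obtain ⟨i, _, rfl⟩ := Finset.mem_image.1 hA
    obtain ⟨k, _, rfl⟩ := Finset.mem_image.1 hB
    rcases total_of s i k with hik | hki
    · exact hadj.2.1 (hnest i k hik hadj.1)
    · exact hadj.2.2 (hnest k i hki (by rw [Finset.inter_comm]; exact hadj.1))
  · rw [Finset.card_image_of_injective _ (fun i k h => hCinj (congrArg Subtype.val h))]
    simp

lemma aux_sparse_exists (P : PartialOrder (Fin n)) (M : Finset (ConnIdeal P))
    (hM : IsMaxIndep (GP P) M) (i : Fin n) :
    ∃ A ∈ M, A.1 \ mu P M A.1 = {i} := by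
  set f : ConnIdeal P → Finset (Fin n) := fun A => A.1 \ mu P M A.1 with hf
  have hdisj : ∀ A ∈ M, ∀ B ∈ M, A ≠ B → Disjoint (f A) (f B) :=
    fun A hA B hB hne => aux_sparse_disjoint hM.1 hA hB hne
  have hbu : (M.biUnion f).card = ∑ A ∈ M, (f A).card := Finset.card_biUnion hdisj
  have hle : (M.biUnion f).card ≤ n := le_trans (Finset.card_le_univ _) (by simp)
  obtain ⟨T, hTind, hTcard⟩ := aux_exists_indep_card P
  have hMn : n ≤ M.card := le_trans (le_of_eq hTcard.symm) (hM.2 T hTind)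
  have h1 : ∀ A ∈ M, 1 ≤ (f A).card :=
    fun A hA => Finset.card_pos.2 (aux_sparse_nonempty hM.1 hA)
  have hsum_ge : M.card ≤ ∑ A ∈ M, (f A).card := by
    calc M.card = ∑ _A ∈ M, 1 := by simp
    _ ≤ ∑ A ∈ M, (f A).card := Finset.sum_le_sum h1
  have hsumn : ∑ A ∈ M, (f A).card = n :=
    le_antisymm (hbu ▸ hle) (le_trans hMn hsum_ge)
  have hMcard : M.card = n := le_antisymm (le_trans hsum_ge (le_of_eq hsumn)) hMn
  have hone : ∀ A ∈ M, (f A).card = 1 := by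
    intro A hA
    by_contra hc
    have h2 : 1 < (f A).card := lt_of_le_of_ne (h1 A hA) (Ne.symm hc)
    have : ∑ _A ∈ M, 1 < ∑ A ∈ M, (f A).card :=
      Finset.sum_lt_sum h1 ⟨A, hA, h2⟩
    rw [Finset.sum_const, smul_eq_mul, mul_one, hsumn, hMcard] at this
    exact lt_irrefl n this
  have hcover : M.biUnion f = Finset.univ := by
    apply Finset.eq_univ_of_card
    rw [hbu, hsumn]; simp
  have hi : i ∈ M.biUnion f := hcover ▸ Finset.mem_univ i
  obtain ⟨A, hA, hiA⟩ := Finset.mem_biUnion.1 hi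
  obtain ⟨a, ha⟩ := Finset.card_eq_one.1 (hone A hA)
  refine ⟨A, hA, ?_⟩
  show f A = {i}
  rw [ha] at hiA ⊢
  rw [Finset.mem_singleton.1 hiA]

/-- Lemma 2.4: for a maximum independent set `M` of `G_P` and
the associated order `F_M`, for every `j` the principal order ideal
`Λ_j^{F_M} = {i : i ≤_{F_M} j}` equals the unique `J ∈ M` with `J \ μ(M,J) = {j}`. -/
theorem statement_7 (n : ℕ) (P : PartialOrder (Fin n))
    (M : Finset (ConnIdeal P)) (hM : IsMaxIndep (GP P) M)
    (j : Fin n) (J : ConnIdeal P) (hJ : J ∈ M)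
    (hjJ : J.1 \ mu P M J.1 = {j}) :
    LamRel (FMle P M) j = J.1 := by
  have hind := hM.1
  apply Finset.ext
  intro x
  simp only [LamRel, Finset.mem_filter, Finset.mem_univ, true_and]
  constructor
  · rintro (rfl | ⟨Ja, hJa, Jb, hJb, hsa, hsb, hss⟩)
    · have hx : x ∈ J.1 \ mu P M J.1 := hjJ ▸ Finset.mem_singleton_self x
      exact (Finset.mem_sdiff.1 hx).1
    · have hJbJ : Jb = J := by
        by_contra hne
        have hd := aux_sparse_disjoint hind hJb hJ hne
        rw [hsb, hjJ, Finset.disjoint_singleton_left] at hd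
        exact hd (Finset.mem_singleton_self j)
      have hxJa : x ∈ Ja.1 :=
        (Finset.mem_sdiff.1 (hsa ▸ Finset.mem_singleton_self x)).1
      exact (hJbJ ▸ hss.1) hxJa
  · intro hxJ
    by_cases hxj : x = j
    · exact Or.inl hxj
    · obtain ⟨Ja, hJaM, hsa⟩ := aux_sparse_exists P M hM x
      refine Or.inr ⟨Ja, hJaM, J, hJ, hsa, hjJ, ?_⟩
      have hxsp : x ∈ Ja.1 \ mu P M Ja.1 := hsa ▸ Finset.mem_singleton_self x
      have hxJa : x ∈ Ja.1 := (Finset.mem_sdiff.1 hxsp).1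
      have hJaJ : Ja.1 ≠ J.1 := by
        intro h
        rw [h, hjJ] at hsa
        exact hxj (Finset.singleton_injective hsa.symm)
      rcases aux_laminar hind hJaM hJ ⟨x, Finset.mem_inter.2 ⟨hxJa, hxJ⟩⟩ with hsub | hsub
      · exact ⟨hsub, fun hc => hJaJ (Finset.Subset.antisymm hsub hc)⟩
      · exfalso
        have hss : J.1 ⊂ Ja.1 := ⟨hsub, fun hc => hJaJ (Finset.Subset.antisymm hc hsub)⟩
        exact (Finset.mem_sdiff.1 hxsp).2 (aux_mem_mu.2 ⟨J, hJ, hss, hxJ⟩)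
end
end
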